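/- arXiv:1706.00850 — 5 statements merged into one kernel-verified Lean document; each statement's English description precedes it below -/
import Mathlib

section
/- Fix an integer r ≥ 1 and a real m > 1. As Ξ → ∞, the integral ∫ over the region {x₁^{(m-1)/m} x₂⋯x_r ≤ Ξ, all x_k ≥ 1} of x₁²/(x₁²+x₂²+⋯+x_r²) dx₁⋯dx_r is bounded above and below by positive constant multiples of Ξ^{m/(m-1)}. -/
open MeasureTheory Set

lemma aux_tail (q : ℝ) (hq : 1 < q) :
    IntegrableOn (fun t : ℝ => t ^ (-q)) (Set.Ici 1) ∧
      ∫ t in Set.Ici (1:ℝ), t ^ (-q) = 1 / (q - 1) := by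
  have h1 : (-q) < -1 := by linarith
  constructor
  · exact (integrableOn_Ici_iff_integrableOn_Ioi (by simp)).2 (integrableOn_Ioi_rpow_of_lt h1 one_pos)
  · rw [integral_Ici_eq_integral_Ioi, integral_Ioi_rpow_of_lt h1 one_pos, Real.one_rpow]
    rw [div_eq_div_iff (by linarith) (by linarith)]
    ring

lemma aux_head (p : ℝ) (hp0 : 0 < p) (hp1 : p < 1) (T : ℝ) (hT : 1 ≤ T) :
    IntegrableOn (fun t : ℝ => t ^ (-p)) (Set.Icc 1 T) ∧
      ∫ t in Set.Icc (1:ℝ) T, t ^ (-p) ≤ T ^ (1 - p) / (1 - p) := by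
  have hcont : ContinuousOn (fun t : ℝ => t ^ (-p)) (Set.Icc 1 T) := by
    apply ContinuousOn.rpow_const continuousOn_id
    intro x hx
    exact Or.inl (by simp only [id_eq]; nlinarith [hx.1])
  have hInt : IntegrableOn (fun t : ℝ => t ^ (-p)) (Set.Icc 1 T) :=
    hcont.integrableOn_compact isCompact_Icc
  refine ⟨hInt, ?_⟩
  rw [MeasureTheory.integral_Icc_eq_integral_Ioc, ← intervalIntegral.integral_of_le hT,
    integral_rpow (Or.inl (by linarith))]
  have h1 : -p + 1 = 1 - p := by ring
  rw [h1, Real.one_rpow]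
  gcongr
  · linarith

set_option maxHeartbeats 2000000 in
/-- For `r ≥ 1` and `m > 1`, the integral of `x₁²/(x₁²+⋯+x_r²)` over
`{x ∈ [1,∞)^r : x₁^{(m-1)/m} x₂⋯x_r ≤ Ξ}` is `≍ Ξ^{m/(m-1)}` as `Ξ → ∞`. -/
theorem integral_weighted_region_asymp (r : ℕ) (hr : 0 < r) (m : ℝ) (hm : 1 < m) :
    ∃ c C Ξ₀ : ℝ, 0 < c ∧ c ≤ C ∧ 0 < Ξ₀ ∧ ∀ Ξ : ℝ, Ξ₀ ≤ Ξ →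
      c * Ξ ^ (m / (m - 1)) ≤
        (∫ x : Fin r → ℝ in
          {x | (∀ k, 1 ≤ x k) ∧
            (x ⟨0, hr⟩) ^ ((m - 1) / m) * ∏ k ∈ Finset.univ.erase ⟨0, hr⟩, x k ≤ Ξ},
          (x ⟨0, hr⟩) ^ 2 / (∑ k, (x k) ^ 2)) ∧
      (∫ x : Fin r → ℝ in
          {x | (∀ k, 1 ≤ x k) ∧
            (x ⟨0, hr⟩) ^ ((m - 1) / m) * ∏ k ∈ Finset.univ.erase ⟨0, hr⟩, x k ≤ Ξ},
          (x ⟨0, hr⟩) ^ 2 / (∑ k, (x k) ^ 2)) ≤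
        C * Ξ ^ (m / (m - 1)) := by
  classical
  have hm0 : (0:ℝ) < m := by linarith
  have hm1 : (0:ℝ) < m - 1 := by linarith
  set i0 : Fin r := ⟨0, hr⟩ with hi0
  set α : ℝ := (m-1)/m with hαdef
  set β : ℝ := m/(m-1) with hβdef
  have hα0 : 0 < α := div_pos hm1 hm0
  have hα1 : α < 1 := by rw [hαdef, div_lt_one hm0]; linarith
  have hβ1 : 1 < β := by rw [hβdef, lt_div_iff₀ hm1]; linarith
  have hβ0 : 0 < β := by linarith
  have hαβ : α * β = 1 := by rw [hαdef, hβdef]; field_simp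
  set p : ℝ := (1+α)/2 with hpdef
  have hp0 : 0 < p := by rw [hpdef]; linarith
  have hp1 : p < 1 := by rw [hpdef]; linarith
  have hpα : α < p := by rw [hpdef]; linarith
  set q : ℝ := p * β with hqdef
  have hq1 : 1 < q := by
    have : α * β < p * β := by gcongr
    rw [hαβ] at this; exact this
  have hq0 : 0 < q := by linarith
  have hαq : α * q = p := by rw [hqdef, ← mul_assoc, mul_comm α p, mul_assoc, hαβ, mul_one]
  -- the constants
  set A : ℝ := (2:ℝ)^(r-1) with hAdef
  have hA0 : (0:ℝ) < A := by positivity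
  have hA1 : (1:ℝ) ≤ A := one_le_pow₀ (by norm_num)
  set c' : ℝ := A ^ (-β) / (8 * r) with hc'def
  set C' : ℝ := (1/(1-p)) * (1/(q-1))^(r-1) with hC'def
  have hc'0 : 0 < c' := by
    apply div_pos (Real.rpow_pos_of_pos hA0 _)
    have : (0:ℝ) < r := by exact_mod_cast hr
    linarith
  have hC'0 : 0 < C' := by
    apply mul_pos
    · rw [one_div]; exact inv_pos.2 (by linarith)
    · apply pow_pos; rw [one_div]; exact inv_pos.2 (by linarith)
  refine ⟨min c' C', max c' C', (2:ℝ)^r, lt_min hc'0 hC'0,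
    le_trans (min_le_left _ _) (le_max_left _ _), by positivity, ?_⟩
  intro Ξ hΞ
  have hΞ1 : (1:ℝ) ≤ Ξ := le_trans (one_le_pow₀ (by norm_num)) hΞ
  have hΞ0 : (0:ℝ) < Ξ := by linarith
  -- notation
  set S : Set (Fin r → ℝ) := {x | (∀ k, 1 ≤ x k) ∧
      (x i0) ^ α * ∏ k ∈ Finset.univ.erase i0, x k ≤ Ξ} with hSdef
  set f : (Fin r → ℝ) → ℝ := fun x => (x i0) ^ 2 / (∑ k, (x k) ^ 2) with hfdef
  have hfnn : ∀ x, 0 ≤ f x := fun x =>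
    div_nonneg (by positivity) (Finset.sum_nonneg fun k _ => by positivity)
  have hS : MeasurableSet S := by
    have : S = (⋂ k, {x : Fin r → ℝ | 1 ≤ x k}) ∩
        {x : Fin r → ℝ | (x i0) ^ α * ∏ k ∈ Finset.univ.erase i0, x k ≤ Ξ} := by
      ext x; simp [hSdef, Set.mem_iInter]
    rw [this]
    apply MeasurableSet.inter
    · exact MeasurableSet.iInter fun k => measurableSet_le measurable_const (measurable_pi_apply k)
    · refine measurableSet_le (Measurable.mul ?_ ?_) measurable_const
      · measurability
      · exact Finset.measurable_prod _ fun k _ => measurable_pi_apply k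
  have hfm : Measurable f :=
    ((measurable_pi_apply _).pow_const 2).div
      (Finset.measurable_sum _ fun k _ => (measurable_pi_apply k).pow_const 2)
  -- the dominating product function
  set g : Fin r → ℝ → ℝ := fun i => if i = i0 then
      Set.indicator (Set.Icc 1 (Ξ^β)) (fun t => Ξ^q * t^(-p))
    else Set.indicator (Set.Ici 1) (fun t => t^(-q)) with hgdef
  set G : (Fin r → ℝ) → ℝ := fun x => ∏ i, g i (x i) with hGdef
  have hgnn : ∀ i t, 0 ≤ g i t := by
    intro i t
    by_cases hi : i = i0
    · simp only [hgdef, if_pos hi]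
      apply Set.indicator_nonneg; intro t ht
      exact mul_nonneg (Real.rpow_nonneg hΞ0.le _) (Real.rpow_nonneg (by linarith [ht.1]) _)
    · simp only [hgdef, if_neg hi]
      apply Set.indicator_nonneg; intro t ht
      exact Real.rpow_nonneg (by linarith [mem_Ici.1 ht]) _
  have hGnn : ∀ x, 0 ≤ G x := fun x => Finset.prod_nonneg fun i _ => hgnn i _
  -- pointwise bound
  have hpt : ∀ x, Set.indicator S f x ≤ G x := by
    intro x
    by_cases hx : x ∈ S
    · rw [Set.indicator_of_mem hx]
      obtain ⟨hx1, hx2⟩ := hx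
      have hxi0 : 1 ≤ x i0 := hx1 i0
      have hP1 : (1:ℝ) ≤ ∏ k ∈ Finset.univ.erase i0, x k := by
        calc (1:ℝ) = ∏ k ∈ Finset.univ.erase i0, (1:ℝ) := by simp
        _ ≤ ∏ k ∈ Finset.univ.erase i0, x k :=
            Finset.prod_le_prod (fun k _ => zero_le_one) (fun k _ => hx1 k)
      -- x i0 ≤ Ξ^β
      have hxa : (x i0) ^ α ≤ Ξ := by
        calc (x i0) ^ α = (x i0) ^ α * 1 := by ring
        _ ≤ (x i0) ^ α * ∏ k ∈ Finset.univ.erase i0, x k := by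
            apply mul_le_mul_of_nonneg_left hP1 (Real.rpow_nonneg (by linarith) _)
        _ ≤ Ξ := hx2
      have hxT : x i0 ≤ Ξ ^ β := by
        calc x i0 = ((x i0) ^ α) ^ β := by
              rw [← Real.rpow_mul (by linarith), hαβ, Real.rpow_one]
        _ ≤ Ξ ^ β := Real.rpow_le_rpow (Real.rpow_nonneg (by linarith) _) hxa hβ0.le
      -- the key product inequality
      have hD : (x i0) ^ p * ∏ k ∈ Finset.univ.erase i0, (x k) ^ q ≤ Ξ ^ q := by
        have h1 : ((x i0) ^ α * ∏ k ∈ Finset.univ.erase i0, x k) ^ q ≤ Ξ ^ q :=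
          Real.rpow_le_rpow (mul_nonneg (Real.rpow_nonneg (by linarith) _) (by linarith)) hx2 hq0.le
        calc (x i0) ^ p * ∏ k ∈ Finset.univ.erase i0, (x k) ^ q
            = ((x i0) ^ α) ^ q * (∏ k ∈ Finset.univ.erase i0, x k) ^ q := by
              rw [← Real.rpow_mul (by linarith), hαq,
                Real.finset_prod_rpow _ _ (fun k _ => by linarith [hx1 k]) q]
        _ = ((x i0) ^ α * ∏ k ∈ Finset.univ.erase i0, x k) ^ q := by
              rw [Real.mul_rpow (Real.rpow_nonneg (by linarith) _) (by linarith)]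
        _ ≤ Ξ ^ q := h1
      -- G x value
      have hGx : G x = Ξ^q * (x i0)^(-p) * ∏ k ∈ Finset.univ.erase i0, (x k)^(-q) := by
        simp only [hGdef]
        rw [← Finset.mul_prod_erase Finset.univ _ (Finset.mem_univ i0)]
        have hg0 : g i0 (x i0) = Ξ^q * (x i0)^(-p) := by
          simp only [hgdef, if_pos rfl]
          rw [Set.indicator_of_mem (Set.mem_Icc.2 ⟨hxi0, hxT⟩)]
        have hg1 : ∀ k ∈ Finset.univ.erase i0, g k (x k) = (x k)^(-q) := by
          intro k hk
          simp only [hgdef, if_neg (Finset.ne_of_mem_erase hk)]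
          rw [Set.indicator_of_mem (Set.mem_Ici.2 (hx1 k))]
        rw [hg0, Finset.prod_congr rfl hg1, mul_assoc]
      have hf1 : f x ≤ 1 := by
        rw [hfdef]
        apply div_le_one_of_le₀
        · calc (x i0)^2 = ∑ k ∈ {i0}, (x k)^2 := by simp
          _ ≤ ∑ k, (x k)^2 := Finset.sum_le_sum_of_subset_of_nonneg
              (Finset.subset_univ _) (fun k _ _ => by positivity)
        · exact Finset.sum_nonneg fun k _ => by positivity
      have hG1 : 1 ≤ G x := by
        rw [hGx]
        have hDpos : (0:ℝ) < (x i0) ^ p * ∏ k ∈ Finset.univ.erase i0, (x k) ^ q := by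
          apply mul_pos (Real.rpow_pos_of_pos (by linarith) _)
          exact Finset.prod_pos fun k _ => Real.rpow_pos_of_pos (by linarith [hx1 k]) _
        have key : (x i0) ^ p * ∏ k ∈ Finset.univ.erase i0, (x k) ^ q ≤ Ξ ^ q := hD
        have expand : Ξ^q * (x i0)^(-p) * ∏ k ∈ Finset.univ.erase i0, (x k)^(-q)
            = Ξ^q / ((x i0) ^ p * ∏ k ∈ Finset.univ.erase i0, (x k) ^ q) := by
          rw [Real.rpow_neg (by linarith : (0:ℝ) ≤ x i0)]
          have : ∏ k ∈ Finset.univ.erase i0, (x k)^(-q)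
              = (∏ k ∈ Finset.univ.erase i0, (x k)^q)⁻¹ := by
            rw [← Finset.prod_inv_distrib]
            exact Finset.prod_congr rfl fun k hk =>
              Real.rpow_neg (by linarith [hx1 k] : (0:ℝ) ≤ x k) q
          rw [this]; ring
        rw [expand, le_div_iff₀ hDpos, one_mul]
        exact key
      exact le_trans hf1 hG1
    · rw [Set.indicator_of_notMem hx]
      exact hGnn x
  -- integrability of g
  have hT1 : (1:ℝ) ≤ Ξ ^ β := Real.one_le_rpow hΞ1 hβ0.le
  have hg_int : ∀ i, Integrable (g i) := by
    intro i
    by_cases hi : i = i0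
    · simp only [hgdef, if_pos hi]
      exact (integrable_indicator_iff measurableSet_Icc).2
        ((aux_head p hp0 hp1 (Ξ^β) hT1).1.const_mul _)
    · simp only [hgdef, if_neg hi]
      exact (integrable_indicator_iff measurableSet_Ici).2 (aux_tail q hq1).1
  have hG_int : Integrable G := Integrable.fintype_prod (𝕜 := ℝ) hg_int
  -- integrability of indicator S f
  have hh_int : Integrable (Set.indicator S f) := by
    apply hG_int.mono ((hfm.indicator hS).aestronglyMeasurable)
    apply ae_of_all
    intro x
    rw [Real.norm_eq_abs, Real.norm_eq_abs,
      abs_of_nonneg (Set.indicator_nonneg (fun y _ => hfnn y) x), abs_of_nonneg (hGnn x)]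
    exact hpt x
  have hIntS : IntegrableOn f S := (integrable_indicator_iff hS).1 hh_int
  -- upper bound
  have hupper : (∫ x in S, f x) ≤ C' * Ξ ^ β := by
    have h1 : (∫ x in S, f x) = ∫ x, Set.indicator S f x := (integral_indicator hS).symm
    have h2 : (∫ x, Set.indicator S f x) ≤ ∫ x, G x :=
      integral_mono hh_int hG_int hpt
    have h3 : (∫ x, G x) = ∏ i, ∫ t, g i t := by
      simp only [hGdef]
      exact integral_fintype_prod_eq_prod g
    have hgtail : ∀ k ∈ Finset.univ.erase i0, (∫ t, g k t) = 1/(q-1) := by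
      intro k hk
      simp only [hgdef, if_neg (Finset.ne_of_mem_erase hk)]
      rw [integral_indicator measurableSet_Ici]
      exact (aux_tail q hq1).2
    have hcard : (Finset.univ.erase i0).card = r - 1 := by
      rw [Finset.card_erase_of_mem (Finset.mem_univ i0), Finset.card_univ, Fintype.card_fin]
    have h4 : ∏ i, (∫ t, g i t) = (∫ t, g i0 t) * (1/(q-1))^(r-1) := by
      rw [← Finset.mul_prod_erase Finset.univ _ (Finset.mem_univ i0),
        Finset.prod_congr rfl hgtail, Finset.prod_const, hcard]
    have h5 : (∫ t, g i0 t) ≤ Ξ^β * (1/(1-p)) := by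
      have : (∫ t, g i0 t) = Ξ^q * ∫ t in Set.Icc (1:ℝ) (Ξ^β), t^(-p) := by
        simp only [hgdef, if_pos rfl]
        rw [integral_indicator measurableSet_Icc, MeasureTheory.integral_const_mul]
      rw [this]
      calc Ξ^q * ∫ t in Set.Icc (1:ℝ) (Ξ^β), t^(-p)
          ≤ Ξ^q * ((Ξ^β)^(1-p)/(1-p)) :=
            mul_le_mul_of_nonneg_left (aux_head p hp0 hp1 (Ξ^β) hT1).2
              (Real.rpow_nonneg hΞ0.le _)
      _ = Ξ^β * (1/(1-p)) := by
          rw [← Real.rpow_mul hΞ0.le, div_eq_mul_one_div, ← mul_assoc,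
            ← Real.rpow_add hΞ0]
          congr 2
          rw [hqdef]; ring
    calc (∫ x in S, f x) = ∫ x, Set.indicator S f x := h1
    _ ≤ ∫ x, G x := h2
    _ = (∫ t, g i0 t) * (1/(q-1))^(r-1) := by rw [h3, h4]
    _ ≤ (Ξ^β * (1/(1-p))) * (1/(q-1))^(r-1) := by
        apply mul_le_mul_of_nonneg_right h5
        apply pow_nonneg
        rw [one_div]
        exact inv_nonneg.2 (by linarith)
    _ = C' * Ξ^β := by rw [hC'def]; ring
  -- lower bound setup
  set T : ℝ := (Ξ / A) ^ β with hTdef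
  have hΞA : 2 ≤ Ξ / A := by
    rw [le_div_iff₀ hA0]
    have h2r : (2:ℝ)^r = 2^(r-1) * 2 := by
      rw [← pow_succ]
      congr 1
      omega
    rw [mul_comm, ← hAdef] at h2r
    linarith [hΞ, h2r ▸ hΞ]
  have hT2 : 2 ≤ T := by
    have h1 : (2:ℝ)^(1:ℝ) ≤ (2:ℝ)^β := Real.rpow_le_rpow_of_exponent_le one_le_two hβ1.le
    have h2 : (2:ℝ)^β ≤ (Ξ/A)^β := Real.rpow_le_rpow (by norm_num) hΞA hβ0.le
    rw [Real.rpow_one] at h1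
    rw [hTdef]
    linarith
  set B : Set (Fin r → ℝ) :=
    Set.pi Set.univ (fun i => if i = i0 then Set.Icc 1 T else Set.Icc 1 2) with hBdef
  have hBmeas : MeasurableSet B := by
    apply MeasurableSet.univ_pi
    intro i
    by_cases hi : i = i0
    · rw [if_pos hi]; exact measurableSet_Icc
    · rw [if_neg hi]; exact measurableSet_Icc
  have hBx : ∀ x ∈ B, (∀ k, 1 ≤ x k) ∧ x i0 ≤ T ∧ ∀ k, k ≠ i0 → x k ≤ 2 := by
    intro x hx
    rw [hBdef, Set.mem_univ_pi] at hx
    refine ⟨fun k => ?_, ?_, fun k hk => ?_⟩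
    · rcases eq_or_ne k i0 with h | h
      · have := hx k; rw [if_pos h] at this; exact this.1
      · have := hx k; rw [if_neg h] at this; exact this.1
    · have := hx i0; rw [if_pos rfl] at this; exact this.2
    · have := hx k; rw [if_neg hk] at this; exact this.2
  have hBS : B ⊆ S := by
    intro x hx
    obtain ⟨hx1, hxT, hx2⟩ := hBx x hx
    refine ⟨hx1, ?_⟩
    have hTα : T ^ α = Ξ / A := by
      rw [hTdef, ← Real.rpow_mul (div_nonneg hΞ0.le hA0.le), mul_comm β α, hαβ, Real.rpow_one]
    have hprod : ∏ k ∈ Finset.univ.erase i0, x k ≤ A := by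
      calc ∏ k ∈ Finset.univ.erase i0, x k ≤ ∏ k ∈ Finset.univ.erase i0, (2:ℝ) :=
          Finset.prod_le_prod (fun k _ => by linarith [hx1 k])
            (fun k hk => hx2 k (Finset.ne_of_mem_erase hk))
      _ = A := by
          rw [Finset.prod_const, Finset.card_erase_of_mem (Finset.mem_univ i0),
            Finset.card_univ, Fintype.card_fin, hAdef]
    have hxa : (x i0) ^ α ≤ Ξ / A := by
      rw [← hTα]
      exact Real.rpow_le_rpow (by linarith [hx1 i0]) hxT hα0.le
    have hPnn : (0:ℝ) ≤ ∏ k ∈ Finset.univ.erase i0, x k :=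
      Finset.prod_nonneg fun k _ => by linarith [hx1 k]
    calc (x i0) ^ α * ∏ k ∈ Finset.univ.erase i0, x k ≤ (Ξ / A) * A :=
        mul_le_mul hxa hprod hPnn (div_nonneg hΞ0.le hA0.le)
    _ = Ξ := div_mul_cancel₀ Ξ hA0.ne'
  have hfB : ∀ x ∈ B, 1/(4*(r:ℝ)) ≤ f x := by
    intro x hx
    obtain ⟨hx1, hxT, hx2⟩ := hBx x hx
    have hr' : (1:ℝ) ≤ r := by exact_mod_cast hr
    have hsum : ∑ k, (x k)^2 ≤ 4 * r * (x i0)^2 := by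
      have hsplit : ∑ k, (x k)^2 = (x i0)^2 + ∑ k ∈ Finset.univ.erase i0, (x k)^2 :=
        (Finset.add_sum_erase Finset.univ _ (Finset.mem_univ i0)).symm
      have htail : ∑ k ∈ Finset.univ.erase i0, (x k)^2 ≤ 4*((r:ℝ)-1) := by
        calc ∑ k ∈ Finset.univ.erase i0, (x k)^2 ≤ ∑ k ∈ Finset.univ.erase i0, (4:ℝ) :=
            Finset.sum_le_sum fun k hk => by
              nlinarith [hx1 k, hx2 k (Finset.ne_of_mem_erase hk)]
        _ = 4*((r:ℝ)-1) := by
            rw [Finset.sum_const, Finset.card_erase_of_mem (Finset.mem_univ i0),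
              Finset.card_univ, Fintype.card_fin, nsmul_eq_mul]
            have : ((r - 1 : ℕ) : ℝ) = (r:ℝ) - 1 := by
              have : (1:ℕ) ≤ r := hr
              push_cast [Nat.cast_sub this]
              ring
            rw [this]; ring
      have h1 : (1:ℝ) ≤ (x i0)^2 := by nlinarith [hx1 i0]
      have hkey : 0 ≤ ((x i0)^2 - 1) * (4*(r:ℝ) - 1) :=
        mul_nonneg (by linarith) (by linarith)
      nlinarith [hsplit, htail, hkey]
    have hpos : (0:ℝ) < ∑ k, (x k)^2 := by
      have : (1:ℝ) ≤ (x i0)^2 := by nlinarith [hx1 i0]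
      have hsplit : ∑ k, (x k)^2 = (x i0)^2 + ∑ k ∈ Finset.univ.erase i0, (x k)^2 :=
        (Finset.add_sum_erase Finset.univ _ (Finset.mem_univ i0)).symm
      have : (0:ℝ) ≤ ∑ k ∈ Finset.univ.erase i0, (x k)^2 :=
        Finset.sum_nonneg fun k _ => sq_nonneg _
      nlinarith
    rw [hfdef]
    rw [div_le_div_iff₀ (by positivity) hpos]
    nlinarith [hx1 i0]
  have hBvol : volume B = ENNReal.ofReal (T - 1) := by
    rw [hBdef, volume_pi_pi, ← Finset.mul_prod_erase Finset.univ _ (Finset.mem_univ i0),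
      if_pos rfl]
    have : ∀ k ∈ Finset.univ.erase i0,
        volume (if k = i0 then Set.Icc (1:ℝ) T else Set.Icc 1 2) = 1 := by
      intro k hk
      rw [if_neg (Finset.ne_of_mem_erase hk), Real.volume_Icc]
      norm_num
    rw [Finset.prod_congr rfl this, Finset.prod_const, one_pow, mul_one, Real.volume_Icc]
  have h6 : 1/(4*(r:ℝ)) * (T - 1) ≤ ∫ x in B, f x := by
    have := setIntegral_ge_of_const_le_real hBmeas
      (by rw [hBvol]; exact ENNReal.ofReal_ne_top) hfB (hIntS.mono_set hBS)
    rwa [measureReal_def, hBvol, ENNReal.toReal_ofReal (by linarith)] at this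
  have h7 : (∫ x in B, f x) ≤ ∫ x in S, f x :=
    setIntegral_mono_set hIntS (ae_of_all _ hfnn) (HasSubset.Subset.eventuallyLE hBS)
  have hlower : min c' C' * Ξ ^ β ≤ ∫ x in S, f x := by
    have hr' : (0:ℝ) < r := by exact_mod_cast hr
    have hTval : T = Ξ^β * A^(-β) := by
      rw [hTdef, Real.div_rpow hΞ0.le hA0.le, Real.rpow_neg hA0.le, div_eq_mul_inv]
    have key : A^(-β) * Ξ^β ≤ 2*(T-1) := by
      rw [mul_comm, ← hTval]; linarith
    calc min c' C' * Ξ ^ β ≤ c' * Ξ ^ β :=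
        mul_le_mul_of_nonneg_right (min_le_left _ _) (Real.rpow_nonneg hΞ0.le _)
    _ = (A^(-β) * Ξ^β)/(8*r) := by rw [hc'def]; ring
    _ ≤ (2*(T-1))/(8*r) := div_le_div_of_nonneg_right key (by positivity)
    _ = 1/(4*(r:ℝ)) * (T - 1) := by
        field_simp
        ring
    _ ≤ ∫ x in B, f x := h6
    _ ≤ ∫ x in S, f x := h7
  constructor
  · exact hlower
  · calc (∫ x in S, f x) ≤ C' * Ξ ^ β := hupper
    _ ≤ max c' C' * Ξ ^ β :=
        mul_le_mul_of_nonneg_right (le_max_right _ _) (Real.rpow_nonneg hΞ0.le _)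
end

section
/- Fix an integer r ≥ 3, reals β ≥ 0 and 0 < α ≤ 2. As Ξ → ∞, the integral of (∏_{k=1}^r x_k^β) · (x₁^α + x₂^α + ⋯ + x_r^α)^{-1} over the region {x₁⋯x_r ≤ Ξ, all x_k ≥ 1} is bounded above and below by positive constant multiples of Ξ^{β+1-α/r}. -/
open MeasureTheory Set
open scoped ENNReal

section Helpers

lemma key1D (ρ B : ℝ) (hρ : 0 < ρ) :
    ∫⁻ t in Set.Ioc (0:ℝ) B, ENNReal.ofReal (t ^ (ρ-1)) ≤ ENNReal.ofReal (B ^ ρ / ρ) := by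
  rcases le_or_gt B 0 with hB | hB
  · rw [Set.Ioc_eq_empty (by exact fun h => absurd (lt_of_lt_of_le h hB) (lt_irrefl 0)),
      Measure.restrict_empty, lintegral_zero_measure]
    exact zero_le
  · have hint : IntervalIntegrable (fun t : ℝ => t ^ (ρ-1)) volume 0 B :=
      intervalIntegral.intervalIntegrable_rpow' (by linarith)
    have hint' : IntegrableOn (fun t : ℝ => t ^ (ρ-1)) (Set.Ioc 0 B) volume := by
      simpa [intervalIntegrable_iff, Set.uIoc_of_le hB.le] using hint
    have hnn : 0 ≤ᵐ[volume.restrict (Set.Ioc (0:ℝ) B)] fun t : ℝ => t ^ (ρ-1) := by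
      filter_upwards [ae_restrict_mem measurableSet_Ioc] with t ht
      exact Real.rpow_nonneg ht.1.le _
    rw [← ofReal_integral_eq_lintegral_ofReal hint' hnn]
    apply ENNReal.ofReal_le_ofReal
    have : ∫ t in Set.Ioc (0:ℝ) B, t ^ (ρ-1) = ∫ t in (0:ℝ)..B, t ^ (ρ-1) := by
      rw [intervalIntegral.integral_of_le hB.le]
    rw [this, integral_rpow (Or.inl (by linarith))]
    rw [Real.zero_rpow (by linarith), sub_add_cancel]
    simp

lemma inner_le {T : Set ℝ} {K : ℝ≥0∞} {c B : ℝ} (hT : T ⊆ Set.Ioc 0 B) (hc : -1 < c)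
    (hK : K ≠ ⊤) :
    ∫⁻ t : ℝ, T.indicator (fun t => ENNReal.ofReal (t ^ c) * K) t ≤
      ENNReal.ofReal (B ^ (c+1) / (c+1)) * K := by
  have h1 : ∀ t, T.indicator (fun t => ENNReal.ofReal (t ^ c) * K) t ≤
      (Set.Ioc 0 B).indicator (fun t => ENNReal.ofReal (t ^ c) * K) t :=
    fun t => Set.indicator_le_indicator_of_subset hT (fun t => zero_le) t
  refine le_trans (lintegral_mono h1) ?_
  rw [lintegral_indicator measurableSet_Ioc]
  rw [lintegral_mul_const' K _ hK]
  refine mul_le_mul_left ?_ K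
  have : ∀ t : ℝ, t ^ c = t ^ ((c+1)-1) := by intro t; norm_num
  simp_rw [this]
  exact key1D (c+1) B (by linarith)

lemma one_le_prod_real {m : ℕ} (z : Fin m → ℝ) (h : ∀ k, 1 ≤ z k) : 1 ≤ ∏ i, z i := by
  calc (1:ℝ) = ∏ _i : Fin m, 1 := by simp
  _ ≤ ∏ i, z i := Finset.prod_le_prod (by simp) (fun i _ => h i)

lemma prod_le_pow_real {m : ℕ} (z : Fin m → ℝ) (t : ℝ) (h : ∀ k, 1 ≤ z k) (h2 : ∀ k, z k ≤ t) :
    ∏ i, z i ≤ t ^ (m:ℝ) := by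
  have h1 : ∀ k, (0:ℝ) ≤ z k := fun k => le_trans zero_le_one (h k)
  calc ∏ i, z i ≤ ∏ _i : Fin m, t := Finset.prod_le_prod (by simpa using fun i => h1 i) (fun i _ => h2 i)
  _ = t ^ (m:ℝ) := by
      rw [Finset.prod_const]
      simp [← Real.rpow_natCast]

lemma meas_prodfun (m : ℕ) : Measurable (fun z : Fin m → ℝ => ∏ i, z i) :=
  Finset.measurable_prod _ (fun i _ => measurable_pi_apply i)

lemma meas_K (m : ℕ) (γ : ℝ) : Measurable (fun z : Fin m → ℝ => ∏ k, ENNReal.ofReal ((z k) ^ γ)) :=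
  Finset.measurable_prod _ (fun i _ => ((measurable_pi_apply i).pow measurable_const).ennreal_ofReal)

lemma K_ne_top {m : ℕ} (γ : ℝ) (z : Fin m → ℝ) :
    (∏ k, ENNReal.ofReal ((z k) ^ γ)) ≠ ⊤ := by
  refine (ENNReal.prod_lt_top ?_).ne
  exact fun k _ => ENNReal.ofReal_lt_top

lemma Wreg_meas (m : ℕ) (q Ξ : ℝ) :
    MeasurableSet {z : Fin m → ℝ | ∀ k, 1 ≤ z k ∧ (∏ i, z i) * (z k) ^ (q-1) ≤ Ξ} := by
  rw [Set.setOf_forall]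
  refine MeasurableSet.iInter fun k => MeasurableSet.inter ?_ ?_
  · exact measurableSet_le measurable_const (measurable_pi_apply k)
  · exact measurableSet_le ((meas_prodfun m).mul ((measurable_pi_apply k).pow measurable_const))
      measurable_const

lemma Amax_meas (m : ℕ) (j : Fin m) :
    MeasurableSet {y : Fin m → ℝ | ∀ k, y k ≤ y j} := by
  rw [Set.setOf_forall]
  exact MeasurableSet.iInter fun k =>
    measurableSet_le (measurable_pi_apply k) (measurable_pi_apply j)

lemma peel (n : ℕ) (j : Fin (n+1)) (f : (Fin (n+1) → ℝ) → ℝ≥0∞) (hf : Measurable f)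
    (S : Set (Fin (n+1) → ℝ)) (hS : MeasurableSet S) :
    ∫⁻ x in S, f x =
      ∫⁻ z : Fin n → ℝ, ∫⁻ t : ℝ, Set.indicator S f (j.insertNth t z) := by
  rw [← lintegral_indicator hS]
  have hmp := (MeasureTheory.volume_preserving_piFinSuccAbove (fun _ : Fin (n+1) => ℝ) j).symm
  rw [← hmp.lintegral_comp (hf.indicator hS)]
  rw [Measure.volume_eq_prod]
  rw [lintegral_prod_symm (fun a : ℝ × (Fin n → ℝ) =>
      S.indicator f ((MeasurableEquiv.piFinSuccAbove (fun _ => ℝ) j).symm a))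
    (((hf.indicator hS).comp (MeasurableEquiv.piFinSuccAbove _ j).symm.measurable).aemeasurable)]
  simp [Fin.insertNthEquiv]

lemma prod_insertNth {n : ℕ} (j : Fin (n+1)) (t : ℝ) (z : Fin n → ℝ) :
    ∏ i, j.insertNth t z i = t * ∏ i, z i := by
  rw [Fin.prod_univ_succAbove _ j]; simp

lemma g_insertNth {n : ℕ} (j : Fin (n+1)) (t : ℝ) (z : Fin n → ℝ) (γ : ℝ) :
    ∏ k, ENNReal.ofReal ((Fin.insertNth (α := fun _ => ℝ) j t z k) ^ γ) =
      ENNReal.ofReal (t ^ γ) * ∏ k, ENNReal.ofReal ((z k) ^ γ) := by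
  rw [Fin.prod_univ_succAbove _ j]; simp

lemma mem_W_insert {n : ℕ} (j : Fin (n+1)) (t : ℝ) (z : Fin n → ℝ) (q Ξ : ℝ) :
    (j.insertNth t z ∈
      ({y : Fin (n+1) → ℝ | ∀ k, 1 ≤ y k ∧ (∏ i, y i) * (y k) ^ (q-1) ≤ Ξ} ∩
        {y | ∀ k, y k ≤ y j})) ↔
    ((1 ≤ t ∧ (t * ∏ i, z i) * t ^ (q-1) ≤ Ξ) ∧
      (∀ k, 1 ≤ z k ∧ (t * ∏ i, z i) * (z k) ^ (q-1) ≤ Ξ)) ∧ (∀ k, z k ≤ t) := by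
  simp only [Set.mem_inter_iff, Set.mem_setOf_eq, Fin.forall_iff_succAbove j,
    prod_insertNth, Fin.insertNth_apply_same, Fin.insertNth_apply_succAbove, le_refl, true_and]
  try tauto

lemma rpow_self_le_rpow_inv {t q Ξ : ℝ} (ht : 1 ≤ t) (hq : 0 < q) (h : t ^ q ≤ Ξ) :
    t ≤ Ξ ^ (1/q) := by
  have ht0 : (0:ℝ) < t := lt_of_lt_of_le zero_lt_one ht
  have h2 : (t ^ q) ^ (1/q) ≤ Ξ ^ (1/q) :=
    Real.rpow_le_rpow (Real.rpow_nonneg ht0.le q) h (by positivity)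
  rwa [← Real.rpow_mul ht0.le, mul_one_div, div_self hq.ne', Real.rpow_one] at h2

theorem W_bound : ∀ m : ℕ, 1 ≤ m → ∀ q γ : ℝ, 2 ≤ q → -1 < γ →
    ∃ C : ℝ, 0 < C ∧ ∀ Ξ : ℝ, 1 ≤ Ξ →
      ∫⁻ z : Fin m → ℝ in {z | ∀ k, 1 ≤ z k ∧ (∏ i, z i) * (z k) ^ (q-1) ≤ Ξ},
        (∏ k, ENNReal.ofReal ((z k) ^ γ)) ≤
          ENNReal.ofReal (C * Ξ ^ ((m * (γ+1)) / (m + q - 1))) := by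
  intro m
  induction m with
  | zero => omega
  | succ n IH =>
    intro _ q γ hq hγ
    have hq0 : (0:ℝ) < q := by linarith
    have hγ1 : (0:ℝ) < γ + 1 := by linarith
    rcases Nat.eq_zero_or_pos n with rfl | hn
    · -- base case m = 1
      refine ⟨1/(γ+1), by positivity, fun Ξ hΞ => ?_⟩
      have hΞ0 : (0:ℝ) < Ξ := by linarith
      set S : Set (Fin 1 → ℝ) :=
        {z | ∀ k, 1 ≤ z k ∧ (∏ i, z i) * (z k) ^ (q-1) ≤ Ξ} with hS
      have hSm : MeasurableSet S := Wreg_meas 1 q Ξ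
      have hg : Measurable (fun z : Fin 1 → ℝ => ∏ k, ENNReal.ofReal ((z k) ^ γ)) := meas_K 1 γ
      have vp := (MeasureTheory.volume_preserving_funUnique (Fin 1) ℝ).symm
      rw [← lintegral_indicator hSm]; erw [← vp.lintegral_comp (hg.indicator hSm)]
      have hrw : ∀ t : ℝ,
          (S.indicator (fun z => ∏ k, ENNReal.ofReal ((z k) ^ γ)))
            ((MeasurableEquiv.funUnique (Fin 1) ℝ).symm t) =
          ({t : ℝ | 1 ≤ t ∧ t * t ^ (q-1) ≤ Ξ}.indicator
            (fun t => ENNReal.ofReal (t ^ γ) * 1)) t := by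
        intro t
        have hm : ((MeasurableEquiv.funUnique (Fin 1) ℝ).symm t ∈ S) ↔
            (1 ≤ t ∧ t * t ^ (q-1) ≤ Ξ) := by
          simp [hS, Fin.forall_fin_one, MeasurableEquiv.funUnique]
        by_cases h : (1 ≤ t ∧ t * t ^ (q-1) ≤ Ξ)
        · rw [Set.indicator_of_mem (hm.mpr h),
            Set.indicator_of_mem (show t ∈ {t : ℝ | 1 ≤ t ∧ t * t ^ (q-1) ≤ Ξ} from h)]
          simp [MeasurableEquiv.funUnique]
        · rw [Set.indicator_of_notMem (fun hx => h (hm.mp hx)),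
            Set.indicator_of_notMem (show t ∉ {t : ℝ | 1 ≤ t ∧ t * t ^ (q-1) ≤ Ξ} from h)]
      simp_rw [hrw]
      have hsub : {t : ℝ | 1 ≤ t ∧ t * t ^ (q-1) ≤ Ξ} ⊆ Set.Ioc 0 (Ξ ^ (1/q)) := by
        rintro t ⟨ht1, ht2⟩
        have ht0 : (0:ℝ) < t := lt_of_lt_of_le zero_lt_one ht1
        have htq : t ^ q ≤ Ξ := by
          have : t ^ q = t * t ^ (q-1) := by
            rw [show q = 1 + (q-1) by ring, Real.rpow_add ht0, Real.rpow_one]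
            ring_nf
          linarith [this ▸ ht2]
        exact ⟨ht0, rpow_self_le_rpow_inv ht1 hq0 htq⟩
      refine le_trans (inner_le hsub hγ (by simp)) ?_
      rw [mul_one]
      apply ENNReal.ofReal_le_ofReal
      rw [← Real.rpow_mul hΞ0.le]
      apply le_of_eq
      push_cast
      rw [one_div_mul_eq_div]
      rw [show (1:ℝ) + q - 1 = q by ring, show (1:ℝ) * (γ+1) = γ+1 by ring]
      rw [div_eq_mul_inv ((γ:ℝ)+1) q, mul_comm (γ+1) q⁻¹, ← one_div]
      ring
    · -- inductive step, m = n + 1 with n ≥ 1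
      set γ' := γ - (γ+1)/q with hγ'def
      have hγ'1 : γ' + 1 = (γ+1)*(q-1)/q := by field_simp [hγ'def]; rw [hγ'def]; field_simp; ring
      have hγ' : -1 < γ' := by
        have : (0:ℝ) < (γ+1)*(q-1)/q := by
          apply div_pos (mul_pos hγ1 (by linarith)) hq0
        linarith [hγ'1 ▸ this]
      obtain ⟨C', hC'pos, hC'⟩ := IH hn (q+1) γ' (by linarith) hγ'
      refine ⟨(n+1) * (C' / (γ+1)), by positivity, fun Ξ hΞ => ?_⟩
      have hΞ0 : (0:ℝ) < Ξ := by linarith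
      set S : Set (Fin (n+1) → ℝ) :=
        {z | ∀ k, 1 ≤ z k ∧ (∏ i, z i) * (z k) ^ (q-1) ≤ Ξ} with hSdef
      have hSm : MeasurableSet S := Wreg_meas (n+1) q Ξ
      set g : (Fin (n+1) → ℝ) → ℝ≥0∞ := fun z => ∏ k, ENNReal.ofReal ((z k) ^ γ) with hgdef
      have hg : Measurable g := meas_K (n+1) γ
      set Z' : Set (Fin n → ℝ) :=
        {z | ∀ k, 1 ≤ z k ∧ (∏ i, z i) * (z k) ^ ((q+1)-1) ≤ Ξ} with hZ'def
      have hZ'm : MeasurableSet Z' := Wreg_meas n (q+1) Ξ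
      set V : ℝ≥0∞ := ENNReal.ofReal (Ξ ^ ((γ+1)/q) / (γ+1)) *
        ENNReal.ofReal (C' * Ξ ^ ((n * (γ'+1)) / (n + (q+1) - 1))) with hVdef
      have key_j : ∀ j : Fin (n+1), ∫⁻ y in S ∩ {y | ∀ k, y k ≤ y j}, g y ≤ V := by
        intro j
        rw [peel n j g hg _ (hSm.inter (Amax_meas (n+1) j))]
        have hinner : ∀ z : Fin n → ℝ,
            (∫⁻ t : ℝ, ((S ∩ {y | ∀ k, y k ≤ y j}).indicator g) (j.insertNth t z)) ≤
            Z'.indicator (fun z =>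
              ENNReal.ofReal ((Ξ / ∏ i, z i) ^ ((γ+1)/q) / (γ+1)) *
                ∏ k, ENNReal.ofReal ((z k) ^ γ)) z := by
          intro z
          by_cases hz : z ∈ Z'
          · rw [Set.indicator_of_mem hz]
            set P := ∏ i, z i with hP
            set Tz := {t : ℝ | j.insertNth t z ∈ S ∩ {y | ∀ k, y k ≤ y j}} with hTz
            have hpt : ∀ t : ℝ, ((S ∩ {y | ∀ k, y k ≤ y j}).indicator g) (j.insertNth t z) =
                Tz.indicator (fun t => ENNReal.ofReal (t ^ γ) *
                  ∏ k, ENNReal.ofReal ((z k) ^ γ)) t := by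
              intro t
              by_cases h : j.insertNth t z ∈ S ∩ {y | ∀ k, y k ≤ y j}
              · rw [Set.indicator_of_mem h, Set.indicator_of_mem (by exact h)]
                exact g_insertNth j t z γ
              · rw [Set.indicator_of_notMem h, Set.indicator_of_notMem (by exact h)]
            simp_rw [hpt]
            have hP1 : (1:ℝ) ≤ P := one_le_prod_real z (fun k => ((hz k).1))
            have hP0 : (0:ℝ) < P := lt_of_lt_of_le zero_lt_one hP1
            have hsub : Tz ⊆ Set.Ioc 0 ((Ξ/P) ^ (1/q)) := by
              intro t ht
              rw [hTz, Set.mem_setOf_eq, mem_W_insert] at ht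
              obtain ⟨⟨⟨ht1, ht2⟩, _⟩, _⟩ := ht
              have ht0 : (0:ℝ) < t := lt_of_lt_of_le zero_lt_one ht1
              have htq : t ^ q ≤ Ξ / P := by
                rw [le_div_iff₀ hP0]
                have : t ^ q = t * t ^ (q-1) := by
                  rw [show q = 1 + (q-1) by ring, Real.rpow_add ht0, Real.rpow_one]; ring_nf
                rw [this]
                calc t * t ^ (q-1) * P = (t * P) * t ^ (q-1) := by ring
                _ ≤ Ξ := ht2
              exact ⟨ht0, rpow_self_le_rpow_inv ht1 hq0 htq⟩
            refine le_trans (inner_le hsub hγ (K_ne_top γ z)) ?_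
            apply le_of_eq
            rw [← Real.rpow_mul (by positivity : (0:ℝ) ≤ Ξ/P), one_div_mul_eq_div]
          · rw [Set.indicator_of_notMem hz]
            have : ∀ t : ℝ, ((S ∩ {y | ∀ k, y k ≤ y j}).indicator g) (j.insertNth t z) = 0 := by
              intro t
              apply Set.indicator_of_notMem
              intro hmem
              apply hz
              rw [mem_W_insert] at hmem
              obtain ⟨⟨_, hk⟩, hle⟩ := hmem
              intro k
              refine ⟨(hk k).1, ?_⟩
              have hz1 : (0:ℝ) < z k := lt_of_lt_of_le zero_lt_one (hk k).1
              have : (z k) ^ ((q+1)-1) = z k * (z k) ^ (q-1) := by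
                rw [show (q+1)-1 = 1 + (q-1) by ring, Real.rpow_add hz1, Real.rpow_one]
              rw [this]
              have hP0 : (0:ℝ) < ∏ i, z i :=
                lt_of_lt_of_le zero_lt_one (one_le_prod_real z (fun k => (hk k).1))
              calc (∏ i, z i) * (z k * (z k) ^ (q-1)) = (z k * ∏ i, z i) * (z k) ^ (q-1) := by
                    ring
              _ ≤ (t * ∏ i, z i) * (z k) ^ (q-1) := by
                    apply mul_le_mul_of_nonneg_right
                    · apply mul_le_mul_of_nonneg_right (hle k) hP0.le
                    · positivity
              _ ≤ Ξ := (hk k).2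
            simp_rw [this]
            simp
        refine le_trans (lintegral_mono hinner) ?_
        rw [lintegral_indicator hZ'm]
        have hcong : ∀ z ∈ Z',
            ENNReal.ofReal ((Ξ / ∏ i, z i) ^ ((γ+1)/q) / (γ+1)) * ∏ k, ENNReal.ofReal ((z k) ^ γ)
            = ENNReal.ofReal (Ξ ^ ((γ+1)/q) / (γ+1)) * ∏ k, ENNReal.ofReal ((z k) ^ γ') := by
          intro z hz
          have hz1 : ∀ k, 1 ≤ z k := fun k => (hz k).1
          have hzpos : ∀ k, (0:ℝ) < z k := fun k => lt_of_lt_of_le zero_lt_one (hz1 k)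
          have hP1 : (1:ℝ) ≤ ∏ i, z i := one_le_prod_real z hz1
          have hP0 : (0:ℝ) < ∏ i, z i := lt_of_lt_of_le zero_lt_one hP1
          have h1 : (Ξ / ∏ i, z i) ^ ((γ+1)/q) / (γ+1)
              = (Ξ ^ ((γ+1)/q) / (γ+1)) * (∏ i, z i) ^ (-((γ+1)/q)) := by
            rw [Real.div_rpow hΞ0.le hP0.le, Real.rpow_neg hP0.le]
            field_simp
          rw [h1, ENNReal.ofReal_mul (by positivity), mul_assoc]
          congr 1
          have h2 : (∏ i, z i) ^ (-((γ+1)/q)) = ∏ i, (z i) ^ (-((γ+1)/q)) :=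
            (Real.finset_prod_rpow _ _ (fun i _ => (hzpos i).le) _).symm
          rw [h2, ENNReal.ofReal_prod_of_nonneg (fun i _ => Real.rpow_nonneg (hzpos i).le _),
            ← Finset.prod_mul_distrib]
          apply Finset.prod_congr rfl
          intro i _
          rw [← ENNReal.ofReal_mul (Real.rpow_nonneg (hzpos i).le _),
            ← Real.rpow_add (hzpos i)]
          congr 2
          rw [hγ'def]; ring
        rw [setLIntegral_congr_fun hZ'm hcong]
        rw [lintegral_const_mul' _ _ ENNReal.ofReal_ne_top]
        rw [hVdef]
        exact mul_le_mul_right (hC' Ξ hΞ) _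
      have hcover : S ⊆ ⋃ j : Fin (n+1), (S ∩ {y | ∀ k, y k ≤ y j}) := by
        intro y hy
        obtain ⟨j, _, hj⟩ := Finset.exists_max_image Finset.univ y ⟨0, Finset.mem_univ 0⟩
        exact Set.mem_iUnion.mpr ⟨j, hy, fun k => hj k (Finset.mem_univ k)⟩
      have hExp : (γ+1)/q + (n:ℝ) * (γ'+1) / ((n:ℝ) + (q+1) - 1)
          = ((n:ℝ)+1) * (γ+1) / (((n:ℝ)+1) + q - 1) := by
        rw [hγ'1]
        have hnq : (0:ℝ) < (n:ℝ) + q := by positivity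
        rw [show (n:ℝ) + (q+1) - 1 = (n:ℝ) + q by ring,
          show ((n:ℝ)+1) + q - 1 = (n:ℝ) + q by ring]
        field_simp
        ring
      have hmulV : Ξ ^ ((γ+1)/q) * Ξ ^ ((n:ℝ) * (γ'+1) / ((n:ℝ) + (q+1) - 1))
          = Ξ ^ (((n:ℝ)+1) * (γ+1) / (((n:ℝ)+1) + q - 1)) := by
        rw [← Real.rpow_add hΞ0, hExp]
      calc ∫⁻ z in S, (∏ k, ENNReal.ofReal ((z k) ^ γ))
          ≤ ∫⁻ z in ⋃ j : Fin (n+1), (S ∩ {y | ∀ k, y k ≤ y j}),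
              (∏ k, ENNReal.ofReal ((z k) ^ γ)) := lintegral_mono_set hcover
      _ ≤ ∑' j : Fin (n+1), ∫⁻ z in S ∩ {y | ∀ k, y k ≤ y j},
              (∏ k, ENNReal.ofReal ((z k) ^ γ)) := lintegral_iUnion_le _ _
      _ = ∑ j : Fin (n+1), ∫⁻ z in S ∩ {y | ∀ k, y k ≤ y j},
              (∏ k, ENNReal.ofReal ((z k) ^ γ)) := tsum_fintype _
      _ ≤ ∑ _j : Fin (n+1), V := Finset.sum_le_sum (fun j _ => key_j j)
      _ = ((n+1 : ℕ) : ℝ≥0∞) * V := by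
            rw [Finset.sum_const, Finset.card_univ, Fintype.card_fin, nsmul_eq_mul]
      _ ≤ ENNReal.ofReal ((n+1) * (C' / (γ+1)) *
            Ξ ^ (((n:ℕ)+1 : ℝ) * (γ+1) / (((n:ℕ)+1 : ℝ) + q - 1))) := by
            rw [hVdef, ← ENNReal.ofReal_natCast (n+1),
              ← ENNReal.ofReal_mul (by positivity), ← ENNReal.ofReal_mul (by positivity)]
            apply ENNReal.ofReal_le_ofReal
            apply le_of_eq
            push_cast
            rw [← hmulV]
            ring
      _ = ENNReal.ofReal ((n+1) * (C' / (γ+1)) *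
            Ξ ^ ((((n:ℕ)+1 : ℕ) : ℝ) * (γ+1) / ((((n:ℕ)+1 : ℕ) : ℝ) + q - 1))) := by
            push_cast
            ring_nf

lemma mem_S_insert {n : ℕ} (j : Fin (n+1)) (t : ℝ) (z : Fin n → ℝ) (Ξ : ℝ) :
    (j.insertNth t z ∈
      ({x : Fin (n+1) → ℝ | (∀ k, 1 ≤ x k) ∧ (∏ k, x k) ≤ Ξ} ∩ {y | ∀ k, y k ≤ y j})) ↔
    ((1 ≤ t ∧ (∀ k, 1 ≤ z k)) ∧ t * ∏ i, z i ≤ Ξ) ∧ (∀ k, z k ≤ t) := by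
  simp only [Set.mem_inter_iff, Set.mem_setOf_eq, Fin.forall_iff_succAbove j,
    prod_insertNth, Fin.insertNth_apply_same, Fin.insertNth_apply_succAbove, le_refl, true_and]
  try tauto

lemma upper_main (n : ℕ) (hn : 2 ≤ n) (β α : ℝ) (hβ : 0 ≤ β) (hα0 : 0 < α) (hα2 : α ≤ 2) :
    ∃ C : ℝ, 0 < C ∧ ∀ Ξ : ℝ, 1 ≤ Ξ →
      ∫⁻ x : Fin (n+1) → ℝ in {x | (∀ k, 1 ≤ x k) ∧ (∏ k, x k) ≤ Ξ},
        ENNReal.ofReal ((∏ k, (x k) ^ β) * (∑ k, (x k) ^ α)⁻¹)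
        ≤ ENNReal.ofReal (C * Ξ ^ (β + 1 - α / (n+1))) := by
  have hn0 : (0:ℝ) < n := by positivity
  have hn2 : (2:ℝ) ≤ n := by exact_mod_cast hn
  set ρ : ℝ := max (β-α+1) (1/4) with hρdef
  have hρ0 : (0:ℝ) < ρ := lt_of_lt_of_le (by norm_num) (le_max_right _ _)
  have hρβ : β - α + 1 ≤ ρ := le_max_left _ _
  set e₀ : ℝ := β + 1 - α - ρ with he₀def
  have he₀ : e₀ ≤ 0 := by simp only [he₀def]; linarith
  set γ : ℝ := β - ρ + e₀/n with hγdef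
  have hγ : -1 < γ := by
    rcases le_total (β-α+1) (1/4) with h | h
    · have hρeq : ρ = 1/4 := max_eq_right h
      have h1 : (-5/8 : ℝ) ≤ e₀/(n:ℝ) := by
        rw [le_div_iff₀ hn0]
        simp only [he₀def, hρeq]
        nlinarith
      simp only [hγdef, hρeq]
      linarith
    · have hρeq : ρ = β - α + 1 := max_eq_left h
      have h1 : e₀ = 0 := by simp only [he₀def, hρeq]; ring
      simp only [hγdef, h1, zero_div]
      rw [hρeq]
      linarith
  have hγ1 : 0 < γ + 1 := by linarith
  obtain ⟨C', hC'pos, hC'⟩ := W_bound n (by omega) 2 γ (by norm_num) hγ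
  refine ⟨((n:ℝ)+1) * (C'/ρ), by positivity, fun Ξ hΞ => ?_⟩
  have hΞ0 : (0:ℝ) < Ξ := by linarith
  set S : Set (Fin (n+1) → ℝ) := {x | (∀ k, 1 ≤ x k) ∧ (∏ k, x k) ≤ Ξ} with hSdef
  have hSm : MeasurableSet S := by
    have h1 : MeasurableSet {x : Fin (n+1) → ℝ | ∀ k, 1 ≤ x k} := by
      rw [Set.setOf_forall]
      exact MeasurableSet.iInter fun k => measurableSet_le measurable_const (measurable_pi_apply k)
    have h2 : MeasurableSet {x : Fin (n+1) → ℝ | (∏ k, x k) ≤ Ξ} :=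
      measurableSet_le (meas_prodfun _) measurable_const
    exact h1.inter h2
  set Z : Set (Fin n → ℝ) := {z | ∀ k, 1 ≤ z k ∧ (∏ i, z i) * (z k) ^ ((2:ℝ)-1) ≤ Ξ} with hZdef
  have hZm : MeasurableSet Z := Wreg_meas n 2 Ξ
  set V : ℝ≥0∞ := ENNReal.ofReal (Ξ^ρ/ρ) *
    ENNReal.ofReal (C' * Ξ ^ ((n:ℝ)*(γ+1)/((n:ℝ)+2-1))) with hVdef
  have key_j : ∀ j : Fin (n+1),
      ∫⁻ x in S ∩ {y | ∀ k, y k ≤ y j},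
        ENNReal.ofReal ((∏ k, (x k) ^ β) * (∑ k, (x k) ^ α)⁻¹) ≤ V := by
    intro j
    set fj : (Fin (n+1) → ℝ) → ℝ≥0∞ := fun x =>
      (∏ k, ENNReal.ofReal ((x k) ^ β)) * ENNReal.ofReal ((x j) ^ (-α)) with hfjdef
    have hfjm : Measurable fj :=
      (meas_K (n+1) β).mul ((measurable_pi_apply j).pow measurable_const).ennreal_ofReal
    have hstepa : ∫⁻ x in S ∩ {y | ∀ k, y k ≤ y j},
        ENNReal.ofReal ((∏ k, (x k) ^ β) * (∑ k, (x k) ^ α)⁻¹) ≤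
        ∫⁻ x in S ∩ {y | ∀ k, y k ≤ y j}, fj x := by
      apply setLIntegral_mono hfjm
      intro x hx
      have hx1 : ∀ k, 1 ≤ x k := hx.1.1
      have hxpos : ∀ k, (0:ℝ) < x k := fun k => lt_of_lt_of_le zero_lt_one (hx1 k)
      have hprodnn : (0:ℝ) ≤ ∏ k, (x k) ^ β :=
        Finset.prod_nonneg (fun k _ => Real.rpow_nonneg (hxpos k).le β)
      have hsum : (x j) ^ α ≤ ∑ k, (x k) ^ α :=
        Finset.single_le_sum (f := fun k => (x k) ^ α)
          (fun k _ => Real.rpow_nonneg (hxpos k).le α) (Finset.mem_univ j)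
      have hinv : (∑ k, (x k) ^ α)⁻¹ ≤ ((x j) ^ α)⁻¹ := by
        apply inv_anti₀ (Real.rpow_pos_of_pos (hxpos j) α) hsum
      calc ENNReal.ofReal ((∏ k, (x k) ^ β) * (∑ k, (x k) ^ α)⁻¹)
          ≤ ENNReal.ofReal ((∏ k, (x k) ^ β) * ((x j) ^ α)⁻¹) :=
            ENNReal.ofReal_le_ofReal (mul_le_mul_of_nonneg_left hinv hprodnn)
      _ = fj x := by
          simp only [hfjdef]
          rw [ENNReal.ofReal_mul hprodnn,
            ENNReal.ofReal_prod_of_nonneg (fun k _ => Real.rpow_nonneg (hxpos k).le β),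
            Real.rpow_neg (hxpos j).le]
    refine le_trans hstepa ?_
    rw [peel n j fj hfjm _ (hSm.inter (Amax_meas (n+1) j))]
    have hinner : ∀ z : Fin n → ℝ,
        (∫⁻ t : ℝ, ((S ∩ {y | ∀ k, y k ≤ y j}).indicator fj) (j.insertNth t z)) ≤
        Z.indicator (fun z =>
          ENNReal.ofReal ((Ξ / ∏ i, z i) ^ ρ / ρ) *
            (ENNReal.ofReal ((∏ i, z i) ^ (e₀/(n:ℝ))) *
              ∏ k, ENNReal.ofReal ((z k) ^ β))) z := by
      intro z
      by_cases hz : z ∈ Z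
      · rw [Set.indicator_of_mem hz]
        set P := ∏ i, z i with hP
        have hz1 : ∀ k, 1 ≤ z k := fun k => (hz k).1
        have hP1 : (1:ℝ) ≤ P := one_le_prod_real z hz1
        have hP0 : (0:ℝ) < P := lt_of_lt_of_le zero_lt_one hP1
        set K' : ℝ≥0∞ := ENNReal.ofReal (P ^ (e₀/(n:ℝ))) * ∏ k, ENNReal.ofReal ((z k) ^ β)
          with hK'def
        set Tz := {t : ℝ | j.insertNth t z ∈ S ∩ {y | ∀ k, y k ≤ y j}} with hTzdef
        have hpt : ∀ t : ℝ, ((S ∩ {y | ∀ k, y k ≤ y j}).indicator fj) (j.insertNth t z) ≤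
            Tz.indicator (fun t => ENNReal.ofReal (t ^ (ρ-1)) * K') t := by
          intro t
          by_cases h : j.insertNth t z ∈ S ∩ {y | ∀ k, y k ≤ y j}
          · rw [Set.indicator_of_mem h, Set.indicator_of_mem (show t ∈ Tz from h)]
            obtain ⟨⟨⟨ht1, _⟩, htP⟩, hle⟩ := (mem_S_insert j t z Ξ).mp h
            have ht0 : (0:ℝ) < t := lt_of_lt_of_le zero_lt_one ht1
            have hval : fj (j.insertNth t z) =
                (ENNReal.ofReal (t ^ β) * ∏ k, ENNReal.ofReal ((z k) ^ β)) *
                  ENNReal.ofReal (t ^ (-α)) := by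
              simp only [hfjdef]
              rw [g_insertNth j t z β]
              rw [Fin.insertNth_apply_same]
            rw [hval]
            have hreal : t ^ β * t ^ (-α) ≤ t ^ (ρ-1) * P ^ (e₀/(n:ℝ)) := by
              have h1 : t ^ β * t ^ (-α) = t ^ (β - α) := by
                rw [← Real.rpow_add ht0]; congr 1
              have h2 : t ^ (β-α) = t ^ (e₀) * t ^ (ρ-1) := by
                rw [← Real.rpow_add ht0]
                congr 1
                simp only [he₀def]; ring
              have hPt : P ≤ t ^ (n:ℝ) := prod_le_pow_real z t hz1 hle
              have h3 : t ^ (e₀ : ℝ) ≤ P ^ (e₀/(n:ℝ)) := by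
                have hh : t ^ (e₀ : ℝ) = (t ^ (n:ℝ)) ^ (e₀/(n:ℝ)) := by
                  rw [← Real.rpow_mul ht0.le]
                  congr 1
                  field_simp
                rw [hh]
                exact Real.rpow_le_rpow_of_nonpos hP0 hPt
                  (div_nonpos_of_nonpos_of_nonneg he₀ hn0.le)
              calc t ^ β * t ^ (-α) = t ^ (e₀) * t ^ (ρ-1) := by rw [h1, h2]
              _ ≤ P ^ (e₀/(n:ℝ)) * t ^ (ρ-1) :=
                  mul_le_mul_of_nonneg_right h3 (Real.rpow_nonneg ht0.le _)
              _ = t ^ (ρ-1) * P ^ (e₀/(n:ℝ)) := mul_comm _ _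
            calc (ENNReal.ofReal (t ^ β) * ∏ k, ENNReal.ofReal ((z k) ^ β)) *
                  ENNReal.ofReal (t ^ (-α))
                = ENNReal.ofReal (t ^ β * t ^ (-α)) * ∏ k, ENNReal.ofReal ((z k) ^ β) := by
                  rw [ENNReal.ofReal_mul (Real.rpow_nonneg ht0.le β)]; ring
            _ ≤ ENNReal.ofReal (t ^ (ρ-1) * P ^ (e₀/(n:ℝ))) *
                  ∏ k, ENNReal.ofReal ((z k) ^ β) :=
                  mul_le_mul_left (ENNReal.ofReal_le_ofReal hreal) _
            _ = ENNReal.ofReal (t ^ (ρ-1)) * K' := by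
                  rw [ENNReal.ofReal_mul (Real.rpow_nonneg ht0.le _), hK'def]; ring
          · rw [Set.indicator_of_notMem h, Set.indicator_of_notMem (show t ∉ Tz from h)]
        refine le_trans (lintegral_mono hpt) ?_
        have hsub : Tz ⊆ Set.Ioc 0 (Ξ/P) := by
          intro t ht
          rw [hTzdef, Set.mem_setOf_eq, mem_S_insert] at ht
          obtain ⟨⟨⟨ht1, _⟩, htP⟩, _⟩ := ht
          have ht0 : (0:ℝ) < t := lt_of_lt_of_le zero_lt_one ht1
          exact ⟨ht0, (le_div_iff₀ hP0).mpr htP⟩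
        refine le_trans (inner_le hsub (by linarith) ?_) ?_
        · rw [hK'def]
          exact ENNReal.mul_ne_top ENNReal.ofReal_ne_top (K_ne_top β z)
        · apply le_of_eq
          rw [show ρ - 1 + 1 = ρ by ring]
      · rw [Set.indicator_of_notMem hz]
        have hzero : ∀ t : ℝ, ((S ∩ {y | ∀ k, y k ≤ y j}).indicator fj) (j.insertNth t z) = 0 := by
          intro t
          apply Set.indicator_of_notMem
          intro hmem
          apply hz
          obtain ⟨⟨⟨ht1, hk1⟩, htP⟩, hle⟩ := (mem_S_insert j t z Ξ).mp hmem
          intro k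
          refine ⟨hk1 k, ?_⟩
          rw [show (2:ℝ)-1 = 1 by norm_num, Real.rpow_one]
          have hP0 : (0:ℝ) < ∏ i, z i :=
            lt_of_lt_of_le zero_lt_one (one_le_prod_real z hk1)
          calc (∏ i, z i) * z k ≤ (∏ i, z i) * t :=
                mul_le_mul_of_nonneg_left (hle k) hP0.le
          _ = t * ∏ i, z i := mul_comm _ _
          _ ≤ Ξ := htP
        simp_rw [hzero]
        simp
    refine le_trans (lintegral_mono hinner) ?_
    rw [lintegral_indicator hZm]
    have hcong : ∀ z ∈ Z,
        ENNReal.ofReal ((Ξ / ∏ i, z i) ^ ρ / ρ) *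
          (ENNReal.ofReal ((∏ i, z i) ^ (e₀/(n:ℝ))) * ∏ k, ENNReal.ofReal ((z k) ^ β))
        = ENNReal.ofReal (Ξ^ρ/ρ) * ∏ k, ENNReal.ofReal ((z k) ^ γ) := by
      intro z hz
      have hz1 : ∀ k, 1 ≤ z k := fun k => (hz k).1
      have hzpos : ∀ k, (0:ℝ) < z k := fun k => lt_of_lt_of_le zero_lt_one (hz1 k)
      have hP1 : (1:ℝ) ≤ ∏ i, z i := one_le_prod_real z hz1
      have hP0 : (0:ℝ) < ∏ i, z i := lt_of_lt_of_le zero_lt_one hP1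
      rw [← mul_assoc, ← ENNReal.ofReal_mul (by positivity)]
      have h1 : (Ξ / ∏ i, z i) ^ ρ / ρ * (∏ i, z i) ^ (e₀/(n:ℝ))
          = (Ξ^ρ/ρ) * (∏ i, z i) ^ (e₀/(n:ℝ) - ρ) := by
        rw [Real.div_rpow hΞ0.le hP0.le, Real.rpow_sub hP0]
        have hPρ : (∏ i, z i) ^ ρ ≠ 0 := (Real.rpow_pos_of_pos hP0 ρ).ne'
        have hρne : ρ ≠ 0 := hρ0.ne'
        field_simp
      rw [h1, ENNReal.ofReal_mul (by positivity), mul_assoc]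
      congr 1
      have h2 : (∏ i, z i) ^ (e₀/(n:ℝ) - ρ) = ∏ i, (z i) ^ (e₀/(n:ℝ) - ρ) :=
        (Real.finset_prod_rpow _ _ (fun i _ => (hzpos i).le) _).symm
      rw [h2, ENNReal.ofReal_prod_of_nonneg (fun i _ => Real.rpow_nonneg (hzpos i).le _),
        ← Finset.prod_mul_distrib]
      apply Finset.prod_congr rfl
      intro i _
      rw [← ENNReal.ofReal_mul (Real.rpow_nonneg (hzpos i).le _),
        ← Real.rpow_add (hzpos i)]
      congr 2
      simp only [hγdef]; ring
    rw [setLIntegral_congr_fun hZm hcong]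
    rw [lintegral_const_mul' _ _ ENNReal.ofReal_ne_top]
    rw [hVdef]
    exact mul_le_mul_right (hC' Ξ hΞ) _
  have hcover : S ⊆ ⋃ j : Fin (n+1), (S ∩ {y | ∀ k, y k ≤ y j}) := by
    intro y hy
    obtain ⟨j, _, hj⟩ := Finset.exists_max_image Finset.univ y ⟨0, Finset.mem_univ 0⟩
    exact Set.mem_iUnion.mpr ⟨j, hy, fun k => hj k (Finset.mem_univ k)⟩
  have hExp : ρ + (n:ℝ)*(γ+1)/((n:ℝ)+2-1) = β + 1 - α/((n:ℝ)+1) := by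
    have hne : (n:ℝ) + 1 ≠ 0 := by positivity
    rw [show (n:ℝ)+2-1 = (n:ℝ)+1 by ring]
    simp only [hγdef, he₀def]
    field_simp
    ring
  have hmulV : Ξ ^ ρ * Ξ ^ ((n:ℝ)*(γ+1)/((n:ℝ)+2-1)) = Ξ ^ (β + 1 - α/((n:ℝ)+1)) := by
    rw [← Real.rpow_add hΞ0, hExp]
  calc ∫⁻ x in S, ENNReal.ofReal ((∏ k, (x k) ^ β) * (∑ k, (x k) ^ α)⁻¹)
      ≤ ∫⁻ x in ⋃ j : Fin (n+1), (S ∩ {y | ∀ k, y k ≤ y j}),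
          ENNReal.ofReal ((∏ k, (x k) ^ β) * (∑ k, (x k) ^ α)⁻¹) :=
        lintegral_mono_set hcover
  _ ≤ ∑' j : Fin (n+1), ∫⁻ x in S ∩ {y | ∀ k, y k ≤ y j},
          ENNReal.ofReal ((∏ k, (x k) ^ β) * (∑ k, (x k) ^ α)⁻¹) :=
        lintegral_iUnion_le _ _
  _ = ∑ j : Fin (n+1), ∫⁻ x in S ∩ {y | ∀ k, y k ≤ y j},
          ENNReal.ofReal ((∏ k, (x k) ^ β) * (∑ k, (x k) ^ α)⁻¹) := tsum_fintype _
  _ ≤ ∑ _j : Fin (n+1), V := Finset.sum_le_sum (fun j _ => key_j j)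
  _ = ((n+1 : ℕ) : ℝ≥0∞) * V := by
        rw [Finset.sum_const, Finset.card_univ, Fintype.card_fin, nsmul_eq_mul]
  _ ≤ ENNReal.ofReal (((n:ℝ)+1) * (C'/ρ) * Ξ ^ (β + 1 - α/((n:ℝ)+1))) := by
        rw [hVdef, ← ENNReal.ofReal_natCast (n+1),
          ← ENNReal.ofReal_mul (by positivity), ← ENNReal.ofReal_mul (by positivity)]
        apply ENNReal.ofReal_le_ofReal
        apply le_of_eq
        push_cast
        rw [← hmulV]
        ring
  _ = ENNReal.ofReal (((n:ℝ)+1) * (C'/ρ) * Ξ ^ (β + 1 - α/((n:ℕ)+1:ℝ))) := by norm_num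

lemma key_alg (u A R av : ℝ) (hu0 : 0 < u) (hR : R ≠ 0) :
    (u^A/2^A) * ((R * u^av)⁻¹) * (u^R/2^R) = 2^(-A-R)/R * u^(A+R-av) := by
  rw [show A+R-av = A + (R + (-av)) by ring,
    Real.rpow_add hu0, Real.rpow_add hu0, Real.rpow_neg hu0.le,
    show -A-R = -A + (-R) by ring,
    Real.rpow_add (by norm_num : (0:ℝ) < 2),
    Real.rpow_neg (by norm_num : (0:ℝ) ≤ 2), Real.rpow_neg (by norm_num : (0:ℝ) ≤ 2)]
  have h2A : (2:ℝ)^A ≠ 0 := (Real.rpow_pos_of_pos (by norm_num) _).ne'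
  have h2R : (2:ℝ)^R ≠ 0 := (Real.rpow_pos_of_pos (by norm_num) _).ne'
  have hua : u^av ≠ 0 := (Real.rpow_pos_of_pos hu0 _).ne'
  field_simp


end Helpers

/-- For `r ≥ 3`, `β ≥ 0`, `0 < α ≤ 2`, the integral of
`(∏ x_k^β)(x₁^α+⋯+x_r^α)⁻¹` over `{x ∈ [1,∞)^r : x₁⋯x_r ≤ Ξ}` is
`≍ Ξ^{β+1-α/r}` as `Ξ → ∞`. -/
theorem integral_product_region_asymp (r : ℕ) (hr : 3 ≤ r) (β α : ℝ)
    (hβ : 0 ≤ β) (hα0 : 0 < α) (hα2 : α ≤ 2) :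
    ∃ c C Ξ₀ : ℝ, 0 < c ∧ c ≤ C ∧ 0 < Ξ₀ ∧ ∀ Ξ : ℝ, Ξ₀ ≤ Ξ →
      c * Ξ ^ (β + 1 - α / r) ≤
        (∫ x : Fin r → ℝ in {x | (∀ k, 1 ≤ x k) ∧ (∏ k, x k) ≤ Ξ},
          (∏ k, (x k) ^ β) * (∑ k, (x k) ^ α)⁻¹) ∧
      (∫ x : Fin r → ℝ in {x | (∀ k, 1 ≤ x k) ∧ (∏ k, x k) ≤ Ξ},
          (∏ k, (x k) ^ β) * (∑ k, (x k) ^ α)⁻¹) ≤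
        C * Ξ ^ (β + 1 - α / r) := by
  obtain ⟨n, rfl⟩ : ∃ n, r = n + 1 := ⟨r - 1, (Nat.succ_pred_eq_of_pos (by omega)).symm⟩
  have hn : 2 ≤ n := by omega
  have hR0 : (0:ℝ) < (n:ℝ) + 1 := by positivity
  have hcast2 : (((n+1):ℕ):ℝ) = (n:ℝ)+1 := by push_cast; ring
  obtain ⟨Cu, hCu0, hCu⟩ := upper_main n hn β α hβ hα0 hα2
  set c : ℝ := (2:ℝ) ^ (-(β*((n:ℝ)+1))-((n:ℝ)+1)) / ((n:ℝ)+1) with hcdef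
  have hc0 : 0 < c := by positivity
  refine ⟨c, max Cu c, (2:ℝ) ^ (n+1), hc0, le_max_right _ _, by positivity, fun Ξ hΞ => ?_⟩
  have hΞ2 : (2:ℝ) ^ (n+1) ≤ Ξ := hΞ
  have hΞ1 : (1:ℝ) ≤ Ξ := le_trans (one_le_pow₀ (by norm_num)) hΞ
  have hΞ0 : (0:ℝ) < Ξ := by linarith
  set S : Set (Fin (n+1) → ℝ) := {x | (∀ k, 1 ≤ x k) ∧ (∏ k, x k) ≤ Ξ} with hSdef
  have hSm : MeasurableSet S := by
    have h1 : MeasurableSet {x : Fin (n+1) → ℝ | ∀ k, 1 ≤ x k} := by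
      rw [Set.setOf_forall]
      exact MeasurableSet.iInter fun k => measurableSet_le measurable_const (measurable_pi_apply k)
    have h2 : MeasurableSet {x : Fin (n+1) → ℝ | (∏ k, x k) ≤ Ξ} :=
      measurableSet_le (meas_prodfun _) measurable_const
    exact h1.inter h2
  set f : (Fin (n+1) → ℝ) → ℝ := fun x => (∏ k, (x k) ^ β) * (∑ k, (x k) ^ α)⁻¹ with hfdef
  have hfm : Measurable f :=
    (Finset.measurable_prod _ fun k _ => (measurable_pi_apply k).pow measurable_const).mul
      (Finset.measurable_sum _ fun k _ => (measurable_pi_apply k).pow measurable_const).inv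
  have hfnn : ∀ x ∈ S, 0 ≤ f x := by
    intro x hx
    have hxpos : ∀ k, (0:ℝ) < x k := fun k => lt_of_lt_of_le zero_lt_one (hx.1 k)
    apply mul_nonneg
    · exact Finset.prod_nonneg fun k _ => Real.rpow_nonneg (hxpos k).le β
    · exact inv_nonneg.mpr (Finset.sum_nonneg fun k _ => Real.rpow_nonneg (hxpos k).le α)
  have hupper : ∫⁻ x in S, ENNReal.ofReal (f x) ≤
      ENNReal.ofReal (Cu * Ξ ^ (β + 1 - α / ((n:ℝ)+1))) := hCu Ξ hΞ1
  have hfin : ∫⁻ x in S, ENNReal.ofReal (f x) ≠ ⊤ :=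
    (lt_of_le_of_lt hupper ENNReal.ofReal_lt_top).ne
  have hint_eq : ∫ x in S, f x = (∫⁻ x in S, ENNReal.ofReal (f x)).toReal := by
    rw [integral_eq_lintegral_of_nonneg_ae]
    · exact (ae_restrict_of_forall_mem hSm hfnn)
    · exact hfm.aestronglyMeasurable.restrict
  constructor
  · -- LOWER BOUND
    set u : ℝ := Ξ ^ (1/((n:ℝ)+1)) with hudef
    have hu0 : (0:ℝ) < u := Real.rpow_pos_of_pos hΞ0 _
    have hu2 : (2:ℝ) ≤ u := by
      have h1 : ((2:ℝ) ^ (n+1) : ℝ) ^ (1/((n:ℝ)+1)) ≤ Ξ ^ (1/((n:ℝ)+1)) :=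
        Real.rpow_le_rpow (by positivity) hΞ2 (by positivity)
      have h2 : ((2:ℝ) ^ (n+1) : ℝ) ^ (1/((n:ℝ)+1)) = 2 := by
        rw [← Real.rpow_natCast 2 (n+1), ← Real.rpow_mul (by norm_num), hcast2]
        rw [mul_one_div, div_self hR0.ne', Real.rpow_one]
      rw [hudef, ← h2]
      exact h1
    set a : ℝ := u/2 with hadef
    set B : Set (Fin (n+1) → ℝ) := Set.univ.pi (fun _ => Set.Icc a u) with hBdef
    have ha1 : (1:ℝ) ≤ a := by rw [hadef]; linarith
    have ha0 : (0:ℝ) < a := lt_of_lt_of_le zero_lt_one ha1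
    have hau : a ≤ u := by rw [hadef]; linarith
    have hBS : B ⊆ S := by
      intro x hx
      rw [hBdef, Set.mem_univ_pi] at hx
      constructor
      · exact fun k => le_trans ha1 (hx k).1
      · calc ∏ k, x k ≤ ∏ _k : Fin (n+1), u :=
              Finset.prod_le_prod (fun k _ => le_trans ha0.le (hx k).1) (fun k _ => (hx k).2)
        _ = u ^ (n+1) := by rw [Finset.prod_const, Finset.card_univ, Fintype.card_fin]
        _ = Ξ := by
              rw [hudef, ← Real.rpow_natCast (Ξ ^ (1/((n:ℝ)+1))) (n+1), ← Real.rpow_mul hΞ0.le,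
                hcast2, one_div_mul_eq_div, div_self hR0.ne', Real.rpow_one]
    set c₀ : ℝ := (a ^ β) ^ (n+1) * (((n:ℝ)+1) * u ^ α)⁻¹ with hc₀def
    have hc₀0 : 0 < c₀ := by
      apply mul_pos
      · exact pow_pos (Real.rpow_pos_of_pos ha0 β) _
      · exact inv_pos.mpr (mul_pos hR0 (Real.rpow_pos_of_pos hu0 α))
    have hflb : ∀ x ∈ B, c₀ ≤ f x := by
      intro x hx
      rw [hBdef, Set.mem_univ_pi] at hx
      have hxpos : ∀ k, (0:ℝ) < x k := fun k => lt_of_lt_of_le ha0 (hx k).1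
      have h1 : (a ^ β) ^ (n+1) ≤ ∏ k, (x k) ^ β := by
        calc (a ^ β) ^ (n+1) = ∏ _k : Fin (n+1), a ^ β := by
              rw [Finset.prod_const, Finset.card_univ, Fintype.card_fin]
        _ ≤ ∏ k, (x k) ^ β :=
              Finset.prod_le_prod (fun k _ => Real.rpow_nonneg ha0.le β)
                (fun k _ => Real.rpow_le_rpow ha0.le (hx k).1 hβ)
      have h2 : ∑ k, (x k) ^ α ≤ ((n:ℝ)+1) * u ^ α := by
        calc ∑ k, (x k) ^ α ≤ ∑ _k : Fin (n+1), u ^ α :=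
              Finset.sum_le_sum (fun k _ =>
                Real.rpow_le_rpow (hxpos k).le (hx k).2 hα0.le)
        _ = ((n:ℝ)+1) * u ^ α := by
              rw [Finset.sum_const, Finset.card_univ, Fintype.card_fin, nsmul_eq_mul, hcast2]
      have hsumpos : 0 < ∑ k, (x k) ^ α :=
        Finset.sum_pos (fun k _ => Real.rpow_pos_of_pos (hxpos k) α) Finset.univ_nonempty
      have h3 : (((n:ℝ)+1) * u ^ α)⁻¹ ≤ (∑ k, (x k) ^ α)⁻¹ := inv_anti₀ hsumpos h2
      rw [hc₀def, hfdef]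
      apply mul_le_mul h1 h3 (inv_nonneg.mpr (by positivity)) (Finset.prod_nonneg
        (fun k _ => Real.rpow_nonneg (hxpos k).le β))
    have hvolB : volume B = ENNReal.ofReal ((u - a) ^ (n+1)) := by
      rw [hBdef, volume_pi_pi, Real.volume_Icc, Finset.prod_const, Finset.card_univ,
        Fintype.card_fin, ← ENNReal.ofReal_pow (by linarith)]
    have hlint_lb : ENNReal.ofReal (c₀ * (u - a) ^ (n+1)) ≤ ∫⁻ x in S, ENNReal.ofReal (f x) := by
      calc ENNReal.ofReal (c₀ * (u - a) ^ (n+1))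
          = ENNReal.ofReal c₀ * volume B := by
            rw [hvolB, ← ENNReal.ofReal_mul hc₀0.le]
      _ = ∫⁻ _x in B, ENNReal.ofReal c₀ := by rw [setLIntegral_const]
      _ ≤ ∫⁻ x in B, ENNReal.ofReal (f x) :=
            setLIntegral_mono hfm.ennreal_ofReal
              (fun x hx => ENNReal.ofReal_le_ofReal (hflb x hx))
      _ ≤ ∫⁻ x in S, ENNReal.ofReal (f x) := lintegral_mono_set hBS
    have hbase : ∀ s : ℝ, u ^ s = Ξ ^ (s/((n:ℝ)+1)) := by
      intro s
      rw [hudef, ← Real.rpow_mul hΞ0.le, one_div_mul_eq_div]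
    have hp1 : (a ^ β) ^ (n+1) = u ^ (β*((n:ℝ)+1)) / 2 ^ (β*((n:ℝ)+1)) := by
      rw [hadef, ← Real.rpow_natCast ((u/2) ^ β) (n+1), ← Real.rpow_mul (by positivity), hcast2,
        Real.div_rpow hu0.le (by norm_num : (0:ℝ) ≤ 2)]
    have hp3 : (u - a) ^ (n+1) = u ^ ((n:ℝ)+1) / 2 ^ ((n:ℝ)+1) := by
      rw [show u - a = u/2 by rw [hadef]; ring, ← Real.rpow_natCast (u/2) (n+1), hcast2,
        Real.div_rpow hu0.le (by norm_num : (0:ℝ) ≤ 2)]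
    have key := key_alg u (β*((n:ℝ)+1)) ((n:ℝ)+1) α hu0 hR0.ne'
    have harith : c₀ * (u - a) ^ (n+1) = c * Ξ ^ (β + 1 - α/((n:ℝ)+1)) := by
      rw [hc₀def, hp1, hp3, hcdef, key, hbase (β*((n:ℝ)+1)+((n:ℝ)+1)-α)]
      congr 2
      field_simp
    calc c * Ξ ^ (β + 1 - α / (((n+1):ℕ):ℝ))
        = c₀ * (u - a) ^ (n+1) := by rw [hcast2]; exact harith.symm
    _ = (ENNReal.ofReal (c₀ * (u - a) ^ (n+1))).toReal := by
        rw [ENNReal.toReal_ofReal (mul_nonneg hc₀0.le (pow_nonneg (by linarith) _))]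
    _ ≤ (∫⁻ x in S, ENNReal.ofReal (f x)).toReal := ENNReal.toReal_mono hfin hlint_lb
    _ = ∫ x in S, f x := hint_eq.symm
  · -- UPPER BOUND
    calc ∫ x in S, f x = (∫⁻ x in S, ENNReal.ofReal (f x)).toReal := hint_eq
    _ ≤ (ENNReal.ofReal (Cu * Ξ ^ (β + 1 - α/((n:ℝ)+1)))).toReal :=
        ENNReal.toReal_mono ENNReal.ofReal_ne_top hupper
    _ = Cu * Ξ ^ (β + 1 - α/((n:ℝ)+1)) := ENNReal.toReal_ofReal (by positivity)
    _ ≤ max Cu c * Ξ ^ (β + 1 - α / (((n+1):ℕ):ℝ)) := by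
        rw [hcast2]
        apply mul_le_mul_of_nonneg_right (le_max_left _ _) (Real.rpow_nonneg hΞ0.le _)
end

section
/- Fix reals β ≥ 0 and 0 < α ≤ 2 with 2β + 2 - α = 0. As Ξ → ∞, the integral of x₁^β x₂^β (x₁^α + x₂^α)^{-1} over the region {x₁x₂ ≤ Ξ, x₁ ≥ 1, x₂ ≥ 1} is bounded above and below by positive constant multiples of log Ξ. -/
open MeasureTheory Set

/- The simplified integrand: with β = 0, α = 2 the integrand is (x²+y²)⁻¹. -/
private noncomputable def F : ℝ × ℝ → ℝ := fun p => (p.1 ^ 2 + p.2 ^ 2)⁻¹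

private lemma F_meas : Measurable F :=
  ((measurable_fst.pow_const 2).add (measurable_snd.pow_const 2)).inv

private lemma F_nonneg (p : ℝ × ℝ) : 0 ≤ F p := by
  unfold F; positivity

private lemma F_int (a : ℝ) : IntegrableOn F (Icc 1 a ×ˢ Icc 1 a) := by
  apply Measure.integrableOn_of_bounded (M := (2:ℝ)⁻¹)
  · exact (IsCompact.measure_lt_top (isCompact_Icc.prod isCompact_Icc)).ne
  · exact F_meas.aestronglyMeasurable
  · filter_upwards [ae_restrict_mem ((measurableSet_Icc.prod measurableSet_Icc))] with p hp
    obtain ⟨⟨h1, _⟩, ⟨h2, _⟩⟩ := hp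
    have h : (2:ℝ) ≤ p.1 ^ 2 + p.2 ^ 2 := by nlinarith
    rw [Real.norm_eq_abs, abs_of_nonneg (F_nonneg p)]
    unfold F
    exact inv_anti₀ (by norm_num) h

private lemma integral_inv_sq' {a b : ℝ} (ha : 0 < a) (hab : a ≤ b) :
    ∫ y in a..b, (y ^ 2)⁻¹ = a⁻¹ - b⁻¹ := by
  have h : ∀ y : ℝ, (y ^ 2)⁻¹ = y ^ (-2 : ℤ) := fun y => by
    rw [zpow_neg, zpow_two, sq]
  simp_rw [h]
  rw [integral_zpow (Or.inr ⟨by norm_num, by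
    rw [uIcc_of_le hab]; rintro ⟨h0, _⟩; linarith⟩)]
  norm_num
  ring

private lemma inner_lower {x : ℝ} (hx : 1 ≤ x) :
    (x - 1) * (2 * x ^ 2)⁻¹ ≤ ∫ y in Icc 1 x, (x ^ 2 + y ^ 2)⁻¹ := by
  rw [integral_Icc_eq_integral_Ioc, ← intervalIntegral.integral_of_le hx]
  have hx0 : (0:ℝ) < x := by linarith
  calc (x - 1) * (2 * x ^ 2)⁻¹ = ∫ _ in (1:ℝ)..x, (2 * x ^ 2)⁻¹ := by
        rw [intervalIntegral.integral_const, smul_eq_mul]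
    _ ≤ ∫ y in (1:ℝ)..x, (x ^ 2 + y ^ 2)⁻¹ := by
        apply intervalIntegral.integral_mono_on hx intervalIntegrable_const
        · exact ((continuous_const.add (continuous_pow 2)).inv₀
            (fun y => (add_pos_of_pos_of_nonneg (pow_pos hx0 2) (sq_nonneg y)).ne')).intervalIntegrable _ _
        · intro y hy
          exact inv_anti₀ (by positivity) (by nlinarith [hy.1, hy.2])

private lemma inner_upper {x Ξ : ℝ} (hx : 1 ≤ x) (hxΞ : x ≤ Ξ) :
    ∫ y in Icc 1 Ξ, (x ^ 2 + y ^ 2)⁻¹ ≤ 2 * x⁻¹ := by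
  have hx0 : (0:ℝ) < x := by linarith
  have hΞ : (1:ℝ) ≤ Ξ := le_trans hx hxΞ
  have hcont : Continuous fun y : ℝ => (x ^ 2 + y ^ 2)⁻¹ :=
    (continuous_const.add (continuous_pow 2)).inv₀ (fun y => (add_pos_of_pos_of_nonneg (pow_pos hx0 2) (sq_nonneg y)).ne')
  rw [integral_Icc_eq_integral_Ioc, ← intervalIntegral.integral_of_le hΞ]
  rw [← intervalIntegral.integral_add_adjacent_intervals
    (hcont.intervalIntegrable 1 x) (hcont.intervalIntegrable x Ξ)]
  have h1 : (∫ y in (1:ℝ)..x, (x ^ 2 + y ^ 2)⁻¹) ≤ x⁻¹ := by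
    calc (∫ y in (1:ℝ)..x, (x ^ 2 + y ^ 2)⁻¹) ≤ ∫ _ in (1:ℝ)..x, (x ^ 2)⁻¹ := by
          apply intervalIntegral.integral_mono_on hx (hcont.intervalIntegrable 1 x)
            intervalIntegrable_const
          intro y hy
          exact inv_anti₀ (by positivity) (by nlinarith [hy.1])
      _ = (x - 1) * (x ^ 2)⁻¹ := by rw [intervalIntegral.integral_const, smul_eq_mul]
      _ ≤ x * (x ^ 2)⁻¹ := mul_le_mul_of_nonneg_right (by linarith) (by positivity)
      _ = x⁻¹ := by rw [sq, mul_inv, ← mul_assoc, mul_inv_cancel₀ hx0.ne', one_mul]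
  have h2 : (∫ y in x..Ξ, (x ^ 2 + y ^ 2)⁻¹) ≤ x⁻¹ := by
    have hIont : IntervalIntegrable (fun y : ℝ => (y ^ 2)⁻¹) volume x Ξ := by
      apply ContinuousOn.intervalIntegrable
      apply ContinuousOn.inv₀ (continuous_pow 2).continuousOn
      intro y hy
      rw [uIcc_of_le hxΞ] at hy
      have hy0 : (0:ℝ) < y := lt_of_lt_of_le hx0 hy.1
      positivity
    calc (∫ y in x..Ξ, (x ^ 2 + y ^ 2)⁻¹) ≤ ∫ y in x..Ξ, (y ^ 2)⁻¹ := by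
          apply intervalIntegral.integral_mono_on hxΞ (hcont.intervalIntegrable x Ξ) hIont
          intro y hy
          have hy0 : (0:ℝ) < y := lt_of_lt_of_le hx0 hy.1
          exact inv_anti₀ (by positivity) (by nlinarith)
      _ = x⁻¹ - Ξ⁻¹ := integral_inv_sq' hx0 hxΞ
      _ ≤ x⁻¹ := by
          have : (0:ℝ) ≤ Ξ⁻¹ := by positivity
          linarith
  linarith

private lemma upper_bound {Ξ : ℝ} (hΞ : 1 ≤ Ξ) :
    (∫ p in Icc 1 Ξ ×ˢ Icc 1 Ξ, F p) ≤ 2 * Real.log Ξ := by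
  have hFI : Integrable F ((volume.restrict (Icc 1 Ξ)).prod (volume.restrict (Icc 1 Ξ))) := by
    rw [Measure.prod_restrict]
    exact Measure.volume_eq_prod ℝ ℝ ▸ F_int Ξ
  have hfub : (∫ p in Icc 1 Ξ ×ˢ Icc 1 Ξ, F p) =
      ∫ x in Icc 1 Ξ, ∫ y in Icc 1 Ξ, F (x, y) := by
    rw [show (volume : Measure (ℝ × ℝ)) = volume.prod volume from Measure.volume_eq_prod ℝ ℝ]
    exact setIntegral_prod F (Measure.volume_eq_prod ℝ ℝ ▸ F_int Ξ)
  rw [hfub]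
  have hmarg : IntegrableOn (fun x => ∫ y in Icc 1 Ξ, F (x, y)) (Icc 1 Ξ) :=
    hFI.integral_prod_left
  have hg : IntegrableOn (fun x : ℝ => 2 * x⁻¹) (Icc 1 Ξ) := by
    apply ContinuousOn.integrableOn_Icc
    apply ContinuousOn.mul continuousOn_const
    apply ContinuousOn.inv₀ continuousOn_id
    intro x hx
    have : (1:ℝ) ≤ x := hx.1
    intro h0; rw [id] at h0; linarith
  calc (∫ x in Icc 1 Ξ, ∫ y in Icc 1 Ξ, F (x, y)) ≤ ∫ x in Icc 1 Ξ, 2 * x⁻¹ := by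
        apply setIntegral_mono_on hmarg hg measurableSet_Icc
        intro x hx
        exact inner_upper hx.1 hx.2
    _ = 2 * Real.log Ξ := by
        rw [integral_Icc_eq_integral_Ioc, ← intervalIntegral.integral_of_le hΞ,
          intervalIntegral.integral_const_mul,
          integral_inv (by rw [uIcc_of_le hΞ]; rintro ⟨h0, _⟩; linarith), div_one]

private lemma lower_bound {Ξ : ℝ} (hΞ : 1 ≤ Ξ) :
    (1/4) * Real.log Ξ - 1/2 ≤
      ∫ p in {p : ℝ × ℝ | 1 ≤ p.2 ∧ p.2 ≤ p.1 ∧ p.1 ≤ Real.sqrt Ξ}, F p := by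
  set σ := Real.sqrt Ξ with hσdef
  have hΞ0 : (0:ℝ) ≤ Ξ := by linarith
  have hσ1 : (1:ℝ) ≤ σ := by
    rw [hσdef, show (1:ℝ) = Real.sqrt 1 from (Real.sqrt_one).symm]
    exact Real.sqrt_le_sqrt hΞ
  set T : Set (ℝ × ℝ) := {p : ℝ × ℝ | 1 ≤ p.2 ∧ p.2 ≤ p.1 ∧ p.1 ≤ σ} with hTdef
  have hTmeas : MeasurableSet T := by
    apply MeasurableSet.inter (measurableSet_le measurable_const measurable_snd)
    exact MeasurableSet.inter (measurableSet_le measurable_snd measurable_fst)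
      (measurableSet_le measurable_fst measurable_const)
  have hTsub : T ⊆ Icc 1 σ ×ˢ Icc 1 σ := by
    rintro p ⟨h1, h2, h3⟩
    exact ⟨⟨le_trans h1 h2, h3⟩, ⟨h1, le_trans h2 h3⟩⟩
  have hI : IntegrableOn (T.indicator F) (Icc 1 σ ×ˢ Icc 1 σ) :=
    (F_int σ).indicator hTmeas
  have hkey : (∫ p in T, F p) = ∫ p in Icc 1 σ ×ˢ Icc 1 σ, T.indicator F p := by
    rw [setIntegral_indicator hTmeas, inter_eq_self_of_subset_right hTsub]
  rw [hkey]
  have hFI : Integrable (T.indicator F)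
      ((volume.restrict (Icc 1 σ)).prod (volume.restrict (Icc 1 σ))) := by
    rw [Measure.prod_restrict]
    exact Measure.volume_eq_prod ℝ ℝ ▸ hI
  have hfub : (∫ p in Icc 1 σ ×ˢ Icc 1 σ, T.indicator F p) =
      ∫ x in Icc 1 σ, ∫ y in Icc 1 σ, T.indicator F (x, y) := by
    rw [show (volume : Measure (ℝ × ℝ)) = volume.prod volume from Measure.volume_eq_prod ℝ ℝ]
    exact setIntegral_prod _ (Measure.volume_eq_prod ℝ ℝ ▸ hI)
  rw [hfub]
  have hmarg : IntegrableOn (fun x => ∫ y in Icc 1 σ, T.indicator F (x, y)) (Icc 1 σ) :=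
    hFI.integral_prod_left
  have hg : IntegrableOn (fun x : ℝ => (x - 1) * (2 * x ^ 2)⁻¹) (Icc 1 σ) := by
    apply ContinuousOn.integrableOn_Icc
    apply ContinuousOn.mul (continuousOn_id.sub continuousOn_const)
    apply ContinuousOn.inv₀ (continuousOn_const.mul (continuous_pow 2).continuousOn)
    intro x hx
    have : (1:ℝ) ≤ x := hx.1
    exact (mul_pos two_pos (pow_pos (by linarith) 2)).ne'
  have hstep : (∫ x in Icc 1 σ, (x - 1) * (2 * x ^ 2)⁻¹) ≤
      ∫ x in Icc 1 σ, ∫ y in Icc 1 σ, T.indicator F (x, y) := by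
    apply setIntegral_mono_on hg hmarg measurableSet_Icc
    intro x hx
    have hinner : (∫ y in Icc 1 σ, T.indicator F (x, y)) = ∫ y in Icc 1 x, F (x, y) := by
      have hptw : (fun y => T.indicator F (x, y)) =
          (Icc 1 x).indicator (fun y => F (x, y)) := by
        funext y
        by_cases hy : y ∈ Icc 1 x
        · rw [indicator_of_mem hy,
            indicator_of_mem (show (x, y) ∈ T from ⟨hy.1, hy.2, hx.2⟩)]
        · rw [indicator_of_notMem hy,
            indicator_of_notMem (fun hT => hy ⟨hT.1, hT.2.1⟩)]
      rw [hptw, setIntegral_indicator measurableSet_Icc,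
        inter_eq_self_of_subset_right (Icc_subset_Icc_right hx.2)]
    rw [hinner]
    exact inner_lower hx.1
  refine le_trans ?_ hstep
  have hcalc : (∫ x in Icc 1 σ, (x - 1) * (2 * x ^ 2)⁻¹) =
      (1/2) * Real.log σ - (1/2) * (1 - σ⁻¹) := by
    rw [integral_Icc_eq_integral_Ioc, ← intervalIntegral.integral_of_le hσ1]
    have hEq : EqOn (fun x : ℝ => (x - 1) * (2 * x ^ 2)⁻¹)
        (fun x : ℝ => (1/2) * x⁻¹ - (1/2) * (x ^ 2)⁻¹) (uIcc 1 σ) := by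
      intro x hx
      rw [uIcc_of_le hσ1] at hx
      have hx1 : (1:ℝ) ≤ x := hx.1
      have hx0 : x ≠ 0 := by linarith
      field_simp
    rw [intervalIntegral.integral_congr hEq]
    have hi1 : IntervalIntegrable (fun x : ℝ => (1/2) * x⁻¹) volume 1 σ := by
      apply ContinuousOn.intervalIntegrable
      apply ContinuousOn.mul continuousOn_const
      apply ContinuousOn.inv₀ continuousOn_id
      intro x hx
      rw [uIcc_of_le hσ1] at hx
      have : (1:ℝ) ≤ x := hx.1
      intro h0; rw [id] at h0; linarith
    have hi2 : IntervalIntegrable (fun x : ℝ => (1/2) * (x ^ 2)⁻¹) volume 1 σ := by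
      apply ContinuousOn.intervalIntegrable
      apply ContinuousOn.mul continuousOn_const
      apply ContinuousOn.inv₀ (continuous_pow 2).continuousOn
      intro x hx
      rw [uIcc_of_le hσ1] at hx
      have : (1:ℝ) ≤ x := hx.1
      positivity
    rw [intervalIntegral.integral_sub hi1 hi2, intervalIntegral.integral_const_mul,
      intervalIntegral.integral_const_mul,
      integral_inv (by rw [uIcc_of_le hσ1]; rintro ⟨h0, _⟩; linarith),
      integral_inv_sq' (by norm_num : (0:ℝ) < 1) hσ1, div_one]
    norm_num
  rw [hcalc]
  have hlogσ : Real.log σ = Real.log Ξ / 2 := Real.log_sqrt hΞ0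
  have hσinv : (0:ℝ) ≤ σ⁻¹ := by positivity
  rw [hlogσ]
  linarith

/-- For `β ≥ 0`, `0 < α ≤ 2` with `2β + 2 - α = 0`, the integral of
`x₁^β x₂^β (x₁^α + x₂^α)⁻¹` over `{(x₁,x₂) ∈ [1,∞)² : x₁x₂ ≤ Ξ}` is
`≍ log Ξ` as `Ξ → ∞`. -/
theorem integral_log_case (β α : ℝ) (hβ : 0 ≤ β) (hα0 : 0 < α) (hα2 : α ≤ 2)
    (hcrit : 2 * β + 2 - α = 0) :
    ∃ c C Ξ₀ : ℝ, 0 < c ∧ c ≤ C ∧ 0 < Ξ₀ ∧ ∀ Ξ : ℝ, Ξ₀ ≤ Ξ →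
      c * Real.log Ξ ≤
        (∫ x : ℝ × ℝ in {x | 1 ≤ x.1 ∧ 1 ≤ x.2 ∧ x.1 * x.2 ≤ Ξ},
          x.1 ^ β * x.2 ^ β * (x.1 ^ α + x.2 ^ α)⁻¹) ∧
      (∫ x : ℝ × ℝ in {x | 1 ≤ x.1 ∧ 1 ≤ x.2 ∧ x.1 * x.2 ≤ Ξ},
          x.1 ^ β * x.2 ^ β * (x.1 ^ α + x.2 ^ α)⁻¹) ≤
        C * Real.log Ξ := by
  have hβ0 : β = 0 := by linarith
  have hα2' : α = 2 := by linarith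
  subst hβ0 hα2'
  refine ⟨1/8, 2, Real.exp 4, by norm_num, by norm_num, Real.exp_pos 4, ?_⟩
  intro Ξ hΞe
  have hΞ1 : (1:ℝ) ≤ Ξ := le_trans (Real.one_le_exp (by norm_num)) hΞe
  have hΞ0 : (0:ℝ) ≤ Ξ := by linarith
  have hlog4 : (4:ℝ) ≤ Real.log Ξ := by
    calc (4:ℝ) = Real.log (Real.exp 4) := (Real.log_exp 4).symm
      _ ≤ Real.log Ξ := Real.log_le_log (Real.exp_pos 4) hΞe
  -- rewrite the integrand
  have hfun : (fun x : ℝ × ℝ => x.1 ^ (0:ℝ) * x.2 ^ (0:ℝ) * (x.1 ^ (2:ℝ) + x.2 ^ (2:ℝ))⁻¹)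
      = F := by
    funext p
    simp [F, Real.rpow_two]
  simp only [Real.rpow_zero, one_mul, Real.rpow_two]
  set R : Set (ℝ × ℝ) := {x : ℝ × ℝ | 1 ≤ x.1 ∧ 1 ≤ x.2 ∧ x.1 * x.2 ≤ Ξ} with hRdef
  show (1/8) * Real.log Ξ ≤ ∫ x in R, F x ∧ (∫ x in R, F x) ≤ 2 * Real.log Ξ
  have hRsub : R ⊆ Icc 1 Ξ ×ˢ Icc 1 Ξ := by
    rintro p ⟨h1, h2, h3⟩
    constructor
    · exact ⟨h1, by nlinarith⟩
    · exact ⟨h2, by nlinarith⟩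
  have hRint : IntegrableOn F R := (F_int Ξ).mono_set hRsub
  constructor
  · -- lower bound
    set σ := Real.sqrt Ξ with hσdef
    have hσσ : σ * σ = Ξ := Real.mul_self_sqrt hΞ0
    have hTsubR : {p : ℝ × ℝ | 1 ≤ p.2 ∧ p.2 ≤ p.1 ∧ p.1 ≤ σ} ⊆ R := by
      rintro p ⟨h1, h2, h3⟩
      refine ⟨le_trans h1 h2, h1, ?_⟩
      have hp2 : p.2 ≤ σ := le_trans h2 h3
      have hp20 : (0:ℝ) ≤ p.2 := by linarith
      calc p.1 * p.2 ≤ σ * σ := by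
            apply mul_le_mul h3 hp2 hp20
            linarith [le_trans (le_trans h1 h2) h3, h1]
        _ = Ξ := hσσ
    have h1 : (∫ p in {p : ℝ × ℝ | 1 ≤ p.2 ∧ p.2 ≤ p.1 ∧ p.1 ≤ σ}, F p) ≤ ∫ x in R, F x :=
      setIntegral_mono_set hRint (Filter.Eventually.of_forall F_nonneg)
        (HasSubset.Subset.eventuallyLE hTsubR)
    have h2 := lower_bound hΞ1
    have : (1/8) * Real.log Ξ ≤ (1/4) * Real.log Ξ - 1/2 := by linarith
    linarith
  · -- upper bound
    calc (∫ x in R, F x) ≤ ∫ p in Icc 1 Ξ ×ˢ Icc 1 Ξ, F p :=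
          setIntegral_mono_set (F_int Ξ) (Filter.Eventually.of_forall F_nonneg)
            (HasSubset.Subset.eventuallyLE hRsub)
      _ ≤ 2 * Real.log Ξ := upper_bound hΞ1
end

section
/- Fix an integer r ≥ 1, an integer s ≥ 1, and a real β ≥ 0 with β ≠ 1. As Ξ → ∞, the integral of x₁^β⋯x_r^β z^β (log z)^s (x₁² + ⋯ + x_r²)^{-1} over the region {x₁⋯x_r · z ≤ Ξ, all x_k ≥ 1, z ≥ 1} is bounded above and below by positive constant multiples of Ξ^{β+1}(log Ξ)^s. -/
open MeasureTheory

namespace IntLogAux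

variable (r s : ℕ) (β : ℝ)

def S (Ξ : ℝ) : Set ((Fin r → ℝ) × ℝ) :=
  {xz | (∀ k, 1 ≤ xz.1 k) ∧ 1 ≤ xz.2 ∧ (∏ k, xz.1 k) * xz.2 ≤ Ξ}

noncomputable def f (xz : (Fin r → ℝ) × ℝ) : ℝ :=
  (∏ k, (xz.1 k) ^ β) * xz.2 ^ β * (Real.log xz.2) ^ s * (∑ k, (xz.1 k) ^ 2)⁻¹

/-- good region -/
def T : Set ((Fin r → ℝ) × ℝ) := {xz | (∀ k, 1 ≤ xz.1 k) ∧ 1 ≤ xz.2}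

lemma S_subset_T (Ξ : ℝ) : S r Ξ ⊆ T r := fun _ h => ⟨h.1, h.2.1⟩

lemma one_le_prodR {x : Fin r → ℝ} (hx : ∀ k, 1 ≤ x k) : (1:ℝ) ≤ ∏ j, x j := by
  calc (1:ℝ) = ∏ _j : Fin r, (1:ℝ) := Finset.prod_const_one.symm
  _ ≤ ∏ j, x j := Finset.prod_le_prod (fun _ _ => zero_le_one) (fun j _ => hx j)

lemma single_le_prodR {x : Fin r → ℝ} (hx : ∀ k, 1 ≤ x k) (k : Fin r) :
    x k ≤ ∏ j, x j := by
  have h := Finset.mul_prod_erase Finset.univ x (Finset.mem_univ k)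
  have h2 : (1:ℝ) ≤ ∏ j ∈ Finset.univ.erase k, x j := by
    calc (1:ℝ) = ∏ _j ∈ Finset.univ.erase k, (1:ℝ) := Finset.prod_const_one.symm
    _ ≤ ∏ j ∈ Finset.univ.erase k, x j :=
      Finset.prod_le_prod (fun _ _ => zero_le_one) (fun j _ => hx j)
  nlinarith [hx k]

lemma isClosed_S (Ξ : ℝ) : IsClosed (S r Ξ) := by
  have h1 : IsClosed {xz : (Fin r → ℝ) × ℝ | ∀ k, 1 ≤ xz.1 k} := by
    have : {xz : (Fin r → ℝ) × ℝ | ∀ k, 1 ≤ xz.1 k} = ⋂ k, {xz | 1 ≤ xz.1 k} := by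
      ext; simp [Set.mem_iInter]
    rw [this]
    exact isClosed_iInter fun k =>
      isClosed_le continuous_const ((continuous_apply k).comp continuous_fst)
  have h2 : IsClosed {xz : (Fin r → ℝ) × ℝ | 1 ≤ xz.2} :=
    isClosed_le continuous_const continuous_snd
  have h3 : IsClosed {xz : (Fin r → ℝ) × ℝ | (∏ k, xz.1 k) * xz.2 ≤ Ξ} :=
    isClosed_le ((continuous_finset_prod _ fun k _ =>
      (continuous_apply k).comp continuous_fst).mul continuous_snd) continuous_const
  have : S r Ξ = {xz : (Fin r → ℝ) × ℝ | ∀ k, 1 ≤ xz.1 k} ∩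
      ({xz | 1 ≤ xz.2} ∩ {xz | (∏ k, xz.1 k) * xz.2 ≤ Ξ}) := by
    ext xz; simp [S, Set.mem_inter_iff, and_assoc]
  rw [this]; exact h1.inter (h2.inter h3)

lemma measurableSet_S (Ξ : ℝ) : MeasurableSet (S r Ξ) := (isClosed_S r Ξ).measurableSet

lemma isCompact_S (Ξ : ℝ) : IsCompact (S r Ξ) := by
  have hbox : IsCompact ((Set.univ.pi fun _ : Fin r => Set.Icc (1:ℝ) Ξ) ×ˢ Set.Icc (1:ℝ) Ξ) :=
    (isCompact_univ_pi fun _ => isCompact_Icc).prod isCompact_Icc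
  refine hbox.of_isClosed_subset (isClosed_S r Ξ) ?_
  rintro ⟨x, z⟩ ⟨hx, hz, hP⟩
  have hPz : ∀ k, x k ≤ Ξ := by
    intro k
    have h1 : x k ≤ ∏ j, x j := single_le_prodR r hx k
    have h2 : (∏ j, x j) * 1 ≤ (∏ j, x j) * z :=
      mul_le_mul_of_nonneg_left hz (Finset.prod_nonneg fun j _ => le_trans zero_le_one (hx j))
    linarith
  have hzΞ : z ≤ Ξ := by
    have h1 : (1:ℝ) ≤ ∏ j, x j := one_le_prodR r hx
    nlinarith
  exact ⟨fun k _ => ⟨hx k, hPz k⟩, hz, hzΞ⟩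

lemma sum_sq_pos (hr : 1 ≤ r) {x : Fin r → ℝ} (hx : ∀ k, 1 ≤ x k) :
    0 < ∑ k, (x k) ^ 2 := by
  have : Nonempty (Fin r) := ⟨⟨0, hr⟩⟩
  exact Finset.sum_pos (fun k _ => by nlinarith [hx k]) Finset.univ_nonempty

lemma continuousOn_f (hr : 1 ≤ r) : ContinuousOn (f r s β) (T r) := by
  apply ContinuousOn.mul
  apply ContinuousOn.mul
  apply ContinuousOn.mul
  · exact continuousOn_finset_prod _ fun k _ =>
      (((continuous_apply k).comp continuous_fst).continuousOn).rpow_const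
        fun xz hxz => Or.inl (by have := hxz.1 k; positivity)
  · exact (continuous_snd.continuousOn).rpow_const
      fun xz hxz => Or.inl (by have := hxz.2; positivity)
  · exact ((continuous_snd.continuousOn).log
      fun xz hxz => by have := hxz.2; positivity).pow s
  · exact ((continuous_finset_sum _ fun k _ =>
      (((continuous_apply k).comp continuous_fst).pow 2)).continuousOn).inv₀
      fun xz hxz => (sum_sq_pos r hr hxz.1).ne'

lemma continuousOn_h (hr : 1 ≤ r) :
    ContinuousOn (fun xz : (Fin r → ℝ) × ℝ => (∑ k, (xz.1 k) ^ 2)⁻¹) (T r) :=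
  ((continuous_finset_sum _ fun k _ =>
      (((continuous_apply k).comp continuous_fst).pow 2)).continuousOn).inv₀
      fun xz hxz => (sum_sq_pos r hr hxz.1).ne'

lemma integrableOn_f (hr : 1 ≤ r) (Ξ : ℝ) : IntegrableOn (f r s β) (S r Ξ) :=
  ((continuousOn_f r s β hr).mono (S_subset_T r Ξ)).integrableOn_compact (isCompact_S r Ξ)

lemma integrableOn_h (hr : 1 ≤ r) (Ξ : ℝ) :
    IntegrableOn (fun xz : (Fin r → ℝ) × ℝ => (∑ k, (xz.1 k) ^ 2)⁻¹) (S r Ξ) :=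
  ((continuousOn_h r hr).mono (S_subset_T r Ξ)).integrableOn_compact (isCompact_S r Ξ)

lemma f_nonneg_on (xz : (Fin r → ℝ) × ℝ) (hxz : xz ∈ T r) : 0 ≤ f r s β xz := by
  obtain ⟨hx, hz⟩ := hxz
  have h1 : 0 ≤ ∏ k, (xz.1 k) ^ β :=
    Finset.prod_nonneg fun k _ => Real.rpow_nonneg (le_trans zero_le_one (hx k)) β
  have h2 : 0 ≤ xz.2 ^ β := Real.rpow_nonneg (le_trans zero_le_one hz) β
  have h3 : 0 ≤ (Real.log xz.2) ^ s := pow_nonneg (Real.log_nonneg hz) s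
  have h4 : 0 ≤ (∑ k, (xz.1 k) ^ 2)⁻¹ := by positivity
  exact mul_nonneg (mul_nonneg (mul_nonneg h1 h2) h3) h4


noncomputable def clow : ℝ :=
  (((2:ℝ)^(r+1))⁻¹) ^ β * ((2:ℝ)⁻¹)^s * ((4*(r:ℝ)))⁻¹ * ((2:ℝ)^(r+1))⁻¹

lemma clow_pos (hr : 1 ≤ r) : 0 < clow r s β := by
  have hr' : (0:ℝ) < r := by exact_mod_cast hr
  have h1 : (0:ℝ) < (((2:ℝ)^(r+1))⁻¹) ^ β := Real.rpow_pos_of_pos (by positivity) β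
  have h2 : (0:ℝ) < ((2:ℝ)⁻¹)^s := by positivity
  have h3 : (0:ℝ) < ((4*(r:ℝ)))⁻¹ := inv_pos.2 (by nlinarith)
  have h4 : (0:ℝ) < ((2:ℝ)^(r+1))⁻¹ := by positivity
  exact mul_pos (mul_pos (mul_pos h1 h2) h3) h4

lemma lower (hr : 1 ≤ r) (hβ : 0 ≤ β) (Ξ : ℝ) (hΞ : (4:ℝ)^(r+1) ≤ Ξ) :
    clow r s β * Ξ ^ (β + 1) * (Real.log Ξ) ^ s ≤ ∫ xz in S r Ξ, f r s β xz := by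
  have h4 : (1:ℝ) ≤ 4 := by norm_num
  have hΞ1 : (1:ℝ) ≤ Ξ := le_trans (one_le_pow₀ h4) hΞ
  have hΞ0 : (0:ℝ) < Ξ := lt_of_lt_of_le zero_lt_one hΞ1
  set a : ℝ := Ξ / 2^(r+1) with ha
  have ha1 : (1:ℝ) ≤ a := by
    rw [ha, le_div_iff₀ (by positivity)]
    have h24 : (2:ℝ)^(r+1) ≤ 4^(r+1) := pow_le_pow_left₀ (by norm_num) (by norm_num) _
    linarith
  have ha0 : (0:ℝ) < a := lt_of_lt_of_le zero_lt_one ha1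
  -- the box
  set B : Set ((Fin r → ℝ) × ℝ) :=
    (Set.univ.pi fun _ : Fin r => Set.Icc (1:ℝ) 2) ×ˢ Set.Icc a (Ξ/2^r) with hB
  have hBS : B ⊆ S r Ξ := by
    rintro ⟨x, z⟩ ⟨hx, hz⟩
    simp only [Set.mem_pi, Set.mem_univ, forall_true_left, Set.mem_Icc] at hx hz
    refine ⟨fun k => (hx k).1, le_trans ha1 hz.1, ?_⟩
    have hprod : ∏ k, x k ≤ 2^r := by
      have := Finset.prod_le_prod (s := Finset.univ) (f := x) (g := fun _ => (2:ℝ))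
        (fun k _ => le_trans zero_le_one (hx k).1) (fun k _ => (hx k).2)
      simpa [Finset.prod_const] using this
    have hz2 : (0:ℝ) ≤ z := le_trans (le_trans zero_le_one ha1) hz.1
    calc (∏ k, x k) * z ≤ 2^r * z := mul_le_mul_of_nonneg_right hprod hz2
    _ ≤ 2^r * (Ξ/2^r) := mul_le_mul_of_nonneg_left hz.2 (by positivity)
    _ = Ξ := by field_simp
  -- constant lower bound on B
  set m : ℝ := a ^ β * (Real.log a) ^ s * ((4*(r:ℝ)))⁻¹ with hm
  have hfB : ∀ xz ∈ B, m ≤ f r s β xz := by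
    rintro ⟨x, z⟩ ⟨hx, hz⟩
    simp only [Set.mem_pi, Set.mem_univ, forall_true_left, Set.mem_Icc] at hx hz
    have hx1 : ∀ k, (1:ℝ) ≤ x k := fun k => (hx k).1
    have hz1 : (1:ℝ) ≤ z := le_trans ha1 hz.1
    have h1 : (1:ℝ) ≤ ∏ k, (x k) ^ β :=
      one_le_prodR r fun k => Real.one_le_rpow (hx1 k) hβ
    have h2 : a ^ β ≤ z ^ β := Real.rpow_le_rpow (le_of_lt ha0) hz.1 hβ
    have h3 : (Real.log a) ^ s ≤ (Real.log z) ^ s :=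
      pow_le_pow_left₀ (Real.log_nonneg ha1) (Real.log_le_log ha0 hz.1) s
    have h4' : (∑ k, (x k) ^ 2) ≤ 4 * r := by
      have := Finset.sum_le_sum (s := Finset.univ) (f := fun k => (x k)^2)
        (g := fun _ => (4:ℝ))
        (fun k _ => by show (x k)^2 ≤ (4:ℝ); nlinarith [(hx k).1, (hx k).2])
      simpa [Finset.sum_const, mul_comm] using this
    have h4 : ((4*(r:ℝ)))⁻¹ ≤ (∑ k, (x k) ^ 2)⁻¹ :=
      inv_anti₀ (sum_sq_pos r hr hx1) h4'
    have hf : f r s β (x, z) = (∏ k, (x k) ^ β) * z ^ β * (Real.log z) ^ s *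
        (∑ k, (x k) ^ 2)⁻¹ := rfl
    rw [hf, hm]
    have hP0 : (0:ℝ) ≤ ∏ k, (x k) ^ β := le_trans zero_le_one h1
    have hA := mul_le_mul h1 h2 (Real.rpow_nonneg (le_of_lt ha0) β) hP0
    rw [one_mul] at hA
    have hB := mul_le_mul hA h3 (pow_nonneg (Real.log_nonneg ha1) s)
      (mul_nonneg hP0 (Real.rpow_nonneg (by linarith : (0:ℝ) ≤ z) β))
    have hC := mul_le_mul hB h4 (by positivity)
      (mul_nonneg (mul_nonneg hP0 (Real.rpow_nonneg (by linarith : (0:ℝ) ≤ z) β))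
        (pow_nonneg (Real.log_nonneg hz1) s))
    calc a^β * (Real.log a)^s * (4*(r:ℝ))⁻¹
        ≤ 1 * a^β * (Real.log a)^s * (4*(r:ℝ))⁻¹ := by rw [one_mul]
    _ ≤ (∏ k, (x k) ^ β) * z ^ β * (Real.log z) ^ s * (∑ k, (x k) ^ 2)⁻¹ := by
        rw [one_mul]; exact hC
  -- measure of B
  have hvolB : (volume B).toReal = a := by
    rw [hB, Measure.volume_eq_prod, Measure.prod_prod, volume_pi_pi]
    simp only [Real.volume_Icc]
    rw [Finset.prod_const]
    norm_num
    rw [show Ξ/2^r - a = a by rw [ha]; field_simp; ring]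
    exact ENNReal.toReal_ofReal (le_of_lt ha0)
  have hBcompact : IsCompact B :=
    (isCompact_univ_pi fun _ => isCompact_Icc).prod isCompact_Icc
  have hBmeas : MeasurableSet B := hBcompact.isClosed.measurableSet
  have step1 : m * a ≤ ∫ xz in B, f r s β xz := by
    have := setIntegral_ge_of_const_le (μ := volume) hBmeas hBcompact.measure_lt_top.ne
      hfB ((integrableOn_f r s β hr Ξ).mono_set hBS)
    change (volume B).toReal • m ≤ _ at this
    rwa [hvolB, smul_eq_mul, mul_comm] at this
  have step2 : (∫ xz in B, f r s β xz) ≤ ∫ xz in S r Ξ, f r s β xz := by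
    apply setIntegral_mono_set (integrableOn_f r s β hr Ξ)
    · refine (ae_restrict_iff' (measurableSet_S r Ξ)).2 (Filter.Eventually.of_forall ?_)
      exact fun xz hxz => f_nonneg_on r s β xz (S_subset_T r Ξ hxz)
    · exact HasSubset.Subset.eventuallyLE hBS
  refine le_trans ?_ (le_trans step1 step2)
  -- arithmetic
  have hlog : Real.log Ξ / 2 ≤ Real.log a := by
    rw [ha, Real.log_div (ne_of_gt hΞ0) (by positivity), Real.log_pow]
    have h2' : ((r:ℝ)+1) * Real.log 2 ≤ Real.log Ξ / 2 := by
      have := Real.log_le_log (by positivity : (0:ℝ) < 4^(r+1)) hΞ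
      rw [Real.log_pow] at this
      have hlog4 : Real.log 4 = 2 * Real.log 2 := by
        rw [show (4:ℝ) = 2^2 by norm_num, Real.log_pow]; push_cast; ring
      push_cast at this ⊢
      nlinarith
    push_cast
    linarith
  have hlogΞ0 : 0 ≤ Real.log Ξ := Real.log_nonneg hΞ1
  have haβ : a ^ β = Ξ ^ β * (((2:ℝ)^(r+1))⁻¹) ^ β := by
    rw [ha, div_eq_mul_inv, Real.mul_rpow (le_of_lt hΞ0) (by positivity)]
  have hlogpow : ((2:ℝ)⁻¹)^s * (Real.log Ξ)^s ≤ (Real.log a)^s := by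
    calc ((2:ℝ)⁻¹)^s * (Real.log Ξ)^s = (Real.log Ξ / 2)^s := by rw [div_pow, inv_pow]; ring
    _ ≤ (Real.log a)^s := pow_le_pow_left₀ (by positivity) hlog s
  calc clow r s β * Ξ ^ (β + 1) * (Real.log Ξ) ^ s
      = (Ξ ^ β * (((2:ℝ)^(r+1))⁻¹) ^ β) * (((2:ℝ)⁻¹)^s * (Real.log Ξ)^s) *
        ((4*(r:ℝ)))⁻¹ * (Ξ * ((2:ℝ)^(r+1))⁻¹) := by
        simp only [clow]; rw [Real.rpow_add_one (ne_of_gt hΞ0)]; ring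
  _ ≤ (Ξ ^ β * (((2:ℝ)^(r+1))⁻¹) ^ β) * ((Real.log a)^s) *
        ((4*(r:ℝ)))⁻¹ * (Ξ * ((2:ℝ)^(r+1))⁻¹) := by
        refine mul_le_mul_of_nonneg_right (mul_le_mul_of_nonneg_right
          (mul_le_mul_of_nonneg_left hlogpow ?_) ?_) ?_ <;> positivity
  _ = m * a := by rw [hm, haβ, ha]; ring


noncomputable def g0 (t : ℝ) : ℝ :=
  (Set.Ici (1:ℝ)).indicator (fun u => u ^ (-(1+2/(r:ℝ)))) t

lemma exp_lt (hr : 1 ≤ r) : -(1+2/(r:ℝ)) < -1 := by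
  have hr' : (0:ℝ) < r := by exact_mod_cast hr
  have : (0:ℝ) < 2/(r:ℝ) := by positivity
  linarith

lemma g0_integrable (hr : 1 ≤ r) : Integrable (g0 r) := by
  have h : IntegrableOn (fun t : ℝ => t ^ (-(1+2/(r:ℝ)))) (Set.Ici 1) := by
    rw [integrableOn_Ici_iff_integrableOn_Ioi]
    exact integrableOn_Ioi_rpow_of_lt (exp_lt r hr) one_pos
  exact (integrable_indicator_iff measurableSet_Ici).2 h

lemma g0_integral (hr : 1 ≤ r) : ∫ t, g0 r t = (r:ℝ)/2 := by
  have hr' : (0:ℝ) < r := by exact_mod_cast hr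
  have h1 : ∫ t, g0 r t = ∫ t in Set.Ici (1:ℝ), t ^ (-(1+2/(r:ℝ))) :=
    integral_indicator measurableSet_Ici
  rw [h1, integral_Ici_eq_integral_Ioi,
    integral_Ioi_rpow_of_lt (exp_lt r hr) one_pos, Real.one_rpow]
  rw [show -(1+2/(r:ℝ)) + 1 = -(2/(r:ℝ)) by ring]
  field_simp

lemma g0_nonneg (t : ℝ) : 0 ≤ g0 r t := by
  unfold g0
  by_cases h : t ∈ Set.Ici (1:ℝ)
  · rw [Set.indicator_of_mem h]
    exact Real.rpow_nonneg (le_trans zero_le_one h) _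
  · rw [Set.indicator_of_notMem h]

lemma sum_inv_le (hr : 1 ≤ r) {x : Fin r → ℝ} (hx : ∀ k, 1 ≤ x k) :
    (∑ k, (x k)^2)⁻¹ ≤ (∏ k, x k) ^ (-(2/(r:ℝ))) := by
  have hr' : (0:ℝ) < r := by exact_mod_cast hr
  set Q : ℝ := ∑ k, (x k)^2 with hQ
  have hQ0 : 0 < Q := sum_sq_pos r hr hx
  have hP1 : (1:ℝ) ≤ ∏ k, x k := one_le_prodR r hx
  have hP0 : (0:ℝ) < ∏ k, x k := lt_of_lt_of_le zero_lt_one hP1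
  have hsq : ∀ k, x k ≤ Real.sqrt Q := by
    intro k
    have h1 : (x k)^2 ≤ Q := Finset.single_le_sum
      (fun j _ => sq_nonneg (x j)) (Finset.mem_univ k)
    have h2 := Real.sqrt_le_sqrt h1
    rwa [Real.sqrt_sq (le_trans zero_le_one (hx k))] at h2
  have hPle : ∏ k, x k ≤ (Real.sqrt Q) ^ r := by
    have := Finset.prod_le_prod (s := Finset.univ) (f := x)
      (g := fun _ => Real.sqrt Q)
      (fun k _ => le_trans zero_le_one (hx k)) (fun k _ => hsq k)
    simpa [Finset.prod_const] using this
  have hsqrtQ : (Real.sqrt Q) ^ r = Q ^ ((r:ℝ)/2) := by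
    rw [Real.sqrt_eq_rpow, ← Real.rpow_natCast (Q ^ ((1:ℝ)/2)) r,
      ← Real.rpow_mul (le_of_lt hQ0)]
    congr 1
    ring
  have key : (∏ k, x k) ^ ((2:ℝ)/(r:ℝ)) ≤ Q := by
    calc (∏ k, x k) ^ ((2:ℝ)/(r:ℝ))
        ≤ (Q ^ ((r:ℝ)/2)) ^ ((2:ℝ)/(r:ℝ)) := by
          apply Real.rpow_le_rpow (le_of_lt hP0) (hsqrtQ ▸ hPle) (by positivity)
    _ = Q := by
        rw [← Real.rpow_mul (le_of_lt hQ0)]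
        rw [show (r:ℝ)/2 * (2/(r:ℝ)) = 1 by field_simp]
        exact Real.rpow_one Q
  have hinv : Q⁻¹ ≤ ((∏ k, x k) ^ ((2:ℝ)/(r:ℝ)))⁻¹ :=
    inv_anti₀ (Real.rpow_pos_of_pos hP0 _) key
  rwa [← Real.rpow_neg (le_of_lt hP0)] at hinv



noncomputable def hfun (xz : (Fin r → ℝ) × ℝ) : ℝ := (∑ k, (xz.1 k) ^ 2)⁻¹

lemma inner_le (hr : 1 ≤ r) {Ξ : ℝ} (hΞ0 : 0 ≤ Ξ) (x : Fin r → ℝ) :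
    (∫ z, (S r Ξ).indicator (hfun r) (x, z)) ≤ Ξ * ∏ k, g0 r (x k) := by
  by_cases hx : ∀ k, 1 ≤ x k
  · set P : ℝ := ∏ k, x k with hPdef
    have hP1 : (1:ℝ) ≤ P := one_le_prodR r hx
    have hP0 : (0:ℝ) < P := lt_of_lt_of_le zero_lt_one hP1
    have hΞP0 : (0:ℝ) ≤ Ξ / P := by positivity
    have hset : (fun z => (S r Ξ).indicator (hfun r) (x, z))
        = (Set.Icc 1 (Ξ/P)).indicator (fun _ => (∑ k, (x k)^2)⁻¹) := by
      funext z
      by_cases hz : (x, z) ∈ S r Ξ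
      · have hmem : z ∈ Set.Icc (1:ℝ) (Ξ/P) :=
          ⟨hz.2.1, (le_div_iff₀ hP0).2 (by rw [mul_comm]; exact hz.2.2)⟩
        rw [Set.indicator_of_mem hz, Set.indicator_of_mem hmem]
        rfl
      · have hmem : z ∉ Set.Icc (1:ℝ) (Ξ/P) := by
          intro hzmem
          exact hz ⟨hx, hzmem.1, by
            have := (le_div_iff₀ hP0).1 hzmem.2; rw [mul_comm] at this; exact this⟩
        rw [Set.indicator_of_notMem hz, Set.indicator_of_notMem hmem]
    rw [hset, integral_indicator measurableSet_Icc, setIntegral_const]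
    have hvol : (volume (Set.Icc (1:ℝ) (Ξ/P))).toReal ≤ Ξ/P := by
      rw [Real.volume_Icc, ENNReal.toReal_ofReal']
      exact max_le (by linarith) hΞP0
    have hsum := sum_inv_le r hr hx
    have hg0 : ∏ k, g0 r (x k) = P ^ (-(1+2/(r:ℝ))) := by
      rw [show ∏ k, g0 r (x k) = ∏ k, (x k) ^ (-(1+2/(r:ℝ))) from
        Finset.prod_congr rfl fun k _ => Set.indicator_of_mem (hx k) _]
      exact Real.finset_prod_rpow _ _ (fun k _ => le_trans zero_le_one (hx k)) _
    have hsplit : P ^ (-(1+2/(r:ℝ))) = P⁻¹ * P ^ (-(2/(r:ℝ))) := by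
      rw [show -(1+2/(r:ℝ)) = (-1) + (-(2/(r:ℝ))) by ring, Real.rpow_add hP0,
        Real.rpow_neg_one]
    have hs0 : (0:ℝ) ≤ (∑ k, (x k)^2)⁻¹ := by positivity
    calc (volume (Set.Icc (1:ℝ) (Ξ/P))).toReal • (∑ k, (x k)^2)⁻¹
        ≤ (Ξ/P) * (P ^ (-(2/(r:ℝ)))) := by
          rw [smul_eq_mul]
          exact mul_le_mul hvol hsum hs0 hΞP0
    _ = Ξ * ∏ k, g0 r (x k) := by rw [hg0, hsplit, div_eq_mul_inv]; ring
  · push_neg at hx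
    obtain ⟨k0, hk0⟩ := hx
    have h0 : (fun z => (S r Ξ).indicator (hfun r) (x, z)) = fun _ => (0:ℝ) := by
      funext z
      exact Set.indicator_of_notMem
        (fun hmem => absurd (hmem.1 k0) (not_le.2 hk0)) _
    have hzero : g0 r (x k0) = 0 := Set.indicator_of_notMem (not_le.2 hk0) _
    have hprod0 : ∏ k, g0 r (x k) = 0 := Finset.prod_eq_zero (Finset.mem_univ k0) hzero
    rw [h0, integral_zero, hprod0, mul_zero]

lemma upper (hr : 1 ≤ r) (hβ : 0 ≤ β) (Ξ : ℝ) (hΞ : 1 ≤ Ξ) :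
    (∫ xz in S r Ξ, f r s β xz) ≤ ((r:ℝ)/2)^r * Ξ ^ (β+1) * (Real.log Ξ)^s := by
  have hΞ0 : (0:ℝ) < Ξ := lt_of_lt_of_le zero_lt_one hΞ
  have hpt : ∀ xz ∈ S r Ξ, f r s β xz ≤ Ξ^β * (Real.log Ξ)^s * hfun r xz := by
    rintro ⟨x, z⟩ ⟨hx, hz, hP⟩
    have hx0 : ∀ k, (0:ℝ) ≤ x k := fun k => le_trans zero_le_one (hx k)
    have hz0 : (0:ℝ) < z := lt_of_lt_of_le zero_lt_one hz
    have hP1 : (1:ℝ) ≤ ∏ k, x k := one_le_prodR r hx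
    have hzΞ : z ≤ Ξ := by nlinarith
    have e1 : (∏ k, (x k)^β) * z^β = ((∏ k, x k) * z) ^ β := by
      rw [Real.finset_prod_rpow _ _ (fun k _ => hx0 k) β,
        ← Real.mul_rpow (le_trans zero_le_one hP1) (le_of_lt hz0)]
    have h1 : ((∏ k, x k) * z) ^ β ≤ Ξ^β := Real.rpow_le_rpow (by positivity) hP hβ
    have h2 : (Real.log z)^s ≤ (Real.log Ξ)^s :=
      pow_le_pow_left₀ (Real.log_nonneg hz) (Real.log_le_log hz0 hzΞ) s
    have hs0 : (0:ℝ) ≤ (∑ k, (x k)^2)⁻¹ := by positivity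
    have hfe : f r s β (x,z)
        = ((∏ k, x k) * z) ^ β * (Real.log z)^s * (∑ k, (x k)^2)⁻¹ := by
      show (∏ k, (x k)^β) * z^β * (Real.log z)^s * (∑ k, (x k)^2)⁻¹ = _
      rw [e1]
    rw [hfe]
    exact mul_le_mul (mul_le_mul h1 h2 (pow_nonneg (Real.log_nonneg hz) s)
      (Real.rpow_nonneg (le_of_lt hΞ0) β)) (le_refl ((∑ k, (x k)^2)⁻¹)) hs0
      (mul_nonneg (Real.rpow_nonneg (le_of_lt hΞ0) β)
        (pow_nonneg (Real.log_nonneg hΞ) s))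
  have hIf := integrableOn_f r s β hr Ξ
  have hIg : IntegrableOn (fun xz => Ξ^β * (Real.log Ξ)^s * hfun r xz) (S r Ξ) :=
    (integrableOn_h r hr Ξ).const_mul _
  have step1 : (∫ xz in S r Ξ, f r s β xz)
      ≤ ∫ xz in S r Ξ, Ξ^β * (Real.log Ξ)^s * hfun r xz :=
    setIntegral_mono_on hIf hIg (measurableSet_S r Ξ) hpt
  have step2 : (∫ xz in S r Ξ, Ξ^β * (Real.log Ξ)^s * hfun r xz)
      = Ξ^β * (Real.log Ξ)^s * ∫ xz in S r Ξ, hfun r xz := integral_const_mul _ _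
  have step3 : (∫ xz in S r Ξ, hfun r xz) ≤ Ξ * ((r:ℝ)/2)^r := by
    have hind : (∫ xz in S r Ξ, hfun r xz) = ∫ xz, (S r Ξ).indicator (hfun r) xz :=
      (integral_indicator (measurableSet_S r Ξ)).symm
    have hInt : Integrable ((S r Ξ).indicator (hfun r)) :=
      (integrable_indicator_iff (measurableSet_S r Ξ)).2 (integrableOn_h r hr Ξ)
    rw [hind]
    rw [Measure.volume_eq_prod] at hInt ⊢
    rw [integral_prod _ hInt]
    have hInner := hInt.integral_prod_left
    have hG : Integrable (fun x : Fin r → ℝ => Ξ * ∏ k, g0 r (x k)) :=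
      (Integrable.fintype_prod (f := fun _ : Fin r => g0 r)
        fun _ => g0_integrable r hr).const_mul Ξ
    calc (∫ x : Fin r → ℝ, ∫ z : ℝ, (S r Ξ).indicator (hfun r) (x, z))
        ≤ ∫ x : Fin r → ℝ, Ξ * ∏ k, g0 r (x k) :=
          integral_mono hInner hG (fun x => inner_le r hr (le_of_lt hΞ0) x)
    _ = Ξ * ∫ x : Fin r → ℝ, ∏ k, g0 r (x k) := integral_const_mul _ _
    _ = Ξ * ((r:ℝ)/2)^r := by
        rw [integral_fintype_prod_volume_eq_pow (ι := Fin r) (g0 r), g0_integral r hr,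
          Fintype.card_fin]
  have hc0 : (0:ℝ) ≤ Ξ^β * (Real.log Ξ)^s :=
    mul_nonneg (Real.rpow_nonneg (le_of_lt hΞ0) β) (pow_nonneg (Real.log_nonneg hΞ) s)
  calc (∫ xz in S r Ξ, f r s β xz)
      ≤ Ξ^β * (Real.log Ξ)^s * ∫ xz in S r Ξ, hfun r xz := step2 ▸ step1
  _ ≤ Ξ^β * (Real.log Ξ)^s * (Ξ * ((r:ℝ)/2)^r) := mul_le_mul_of_nonneg_left step3 hc0
  _ = ((r:ℝ)/2)^r * Ξ ^ (β+1) * (Real.log Ξ)^s := by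
      rw [Real.rpow_add_one (ne_of_gt hΞ0)]; ring


end IntLogAux

open IntLogAux in
/-- For `r ≥ 1`, `s ≥ 1`, `β ≥ 0`, `β ≠ 1`, the integral of
`x₁^β⋯x_r^β z^β (log z)^s (x₁²+⋯+x_r²)⁻¹` over
`{(x,z) ∈ [1,∞)^{r+1} : x₁⋯x_r·z ≤ Ξ}` is `≍ Ξ^{β+1}(log Ξ)^s` as `Ξ → ∞`. -/
theorem integral_log_weight_asymp (r s : ℕ) (hr : 1 ≤ r) (hs : 1 ≤ s)
    (β : ℝ) (hβ : 0 ≤ β) (hβ1 : β ≠ 1) :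
    ∃ c C Ξ₀ : ℝ, 0 < c ∧ c ≤ C ∧ 0 < Ξ₀ ∧ ∀ Ξ : ℝ, Ξ₀ ≤ Ξ →
      c * Ξ ^ (β + 1) * (Real.log Ξ) ^ s ≤
        (∫ xz : (Fin r → ℝ) × ℝ in
          {xz | (∀ k, 1 ≤ xz.1 k) ∧ 1 ≤ xz.2 ∧ (∏ k, xz.1 k) * xz.2 ≤ Ξ},
          (∏ k, (xz.1 k) ^ β) * xz.2 ^ β * (Real.log xz.2) ^ s *
            (∑ k, (xz.1 k) ^ 2)⁻¹) ∧
      (∫ xz : (Fin r → ℝ) × ℝ in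
          {xz | (∀ k, 1 ≤ xz.1 k) ∧ 1 ≤ xz.2 ∧ (∏ k, xz.1 k) * xz.2 ≤ Ξ},
          (∏ k, (xz.1 k) ^ β) * xz.2 ^ β * (Real.log xz.2) ^ s *
            (∑ k, (xz.1 k) ^ 2)⁻¹) ≤
        C * Ξ ^ (β + 1) * (Real.log Ξ) ^ s := by
  refine ⟨clow r s β, clow r s β + ((r:ℝ)/2)^r, (4:ℝ)^(r+1),
    clow_pos r s β hr, le_add_of_nonneg_right (by positivity), by positivity, ?_⟩
  intro Ξ hΞ
  have hΞ1 : (1:ℝ) ≤ Ξ := le_trans (one_le_pow₀ (by norm_num)) hΞ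
  have hI : (∫ xz : (Fin r → ℝ) × ℝ in
          {xz | (∀ k, 1 ≤ xz.1 k) ∧ 1 ≤ xz.2 ∧ (∏ k, xz.1 k) * xz.2 ≤ Ξ},
          (∏ k, (xz.1 k) ^ β) * xz.2 ^ β * (Real.log xz.2) ^ s *
            (∑ k, (xz.1 k) ^ 2)⁻¹)
      = ∫ xz in S r Ξ, f r s β xz := rfl
  rw [hI]
  refine ⟨lower r s β hr hβ Ξ hΞ, ?_⟩
  have hup := upper r s β hr hβ Ξ hΞ1
  have hA : (0:ℝ) ≤ Ξ ^ (β+1) := Real.rpow_nonneg (by linarith) _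
  have hB : (0:ℝ) ≤ (Real.log Ξ)^s := pow_nonneg (Real.log_nonneg hΞ1) s
  have hc := clow_pos r s β hr
  nlinarith [mul_nonneg hA hB, mul_le_mul_of_nonneg_right
    (le_add_of_nonneg_left hc.le : ((r:ℝ)/2)^r ≤ clow r s β + ((r:ℝ)/2)^r)
    (mul_nonneg hA hB)]
end

section
/- Fix integers r ≥ 1 and a real m > 1. For the sum N(Ξ) = Σ over positive-integer r-tuples (ν₁,…,ν_r) with ν₁^{(m-1)/m} ν₂ ⋯ ν_r ≤ Ξ of ν₁² (1 + ν₁² + ⋯ + ν_r²)^{-1}: as Ξ → ∞, N(Ξ) is bounded above and below by positive constant multiples of Ξ^{m/(m-1)}. -/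
open Finset Real

set_option maxHeartbeats 1000000 in
/-- Discrete counterpart of the derivative lower-bound integral: for `r ≥ 1`, `m > 1`,
the sum `N(Ξ) = Σ_{ν₁^{(m-1)/m} ν₂⋯ν_r ≤ Ξ} ν₁² (1 + ν₁² + ⋯ + ν_r²)⁻¹`
over positive-integer tuples is `≍ Ξ^{m/(m-1)}` as `Ξ → ∞`. -/
theorem sum_weighted_region_asymp (r : ℕ) (hr : 0 < r) (m : ℝ) (hm : 1 < m) :
    ∃ c C Ξ₀ : ℝ, 0 < c ∧ c ≤ C ∧ 0 < Ξ₀ ∧ ∀ Ξ : ℝ, Ξ₀ ≤ Ξ →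
      c * Ξ ^ (m / (m - 1)) ≤
        (∑' ν : {v : Fin r → ℕ // (∀ k, 0 < v k) ∧
            ((v ⟨0, hr⟩ : ℝ)) ^ ((m - 1) / m) *
              ∏ k ∈ Finset.univ.erase ⟨0, hr⟩, ((v k : ℝ)) ≤ Ξ},
          ((ν.1 ⟨0, hr⟩ : ℝ)) ^ 2 / (1 + ∑ k, ((ν.1 k : ℝ)) ^ 2)) ∧
      (∑' ν : {v : Fin r → ℕ // (∀ k, 0 < v k) ∧
            ((v ⟨0, hr⟩ : ℝ)) ^ ((m - 1) / m) *
              ∏ k ∈ Finset.univ.erase ⟨0, hr⟩, ((v k : ℝ)) ≤ Ξ},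
          ((ν.1 ⟨0, hr⟩ : ℝ)) ^ 2 / (1 + ∑ k, ((ν.1 k : ℝ)) ^ 2)) ≤
        C * Ξ ^ (m / (m - 1)) := by
  classical
  obtain ⟨n, rfl⟩ : ∃ n, r = n + 1 := ⟨r - 1, (Nat.succ_pred_eq_of_pos hr).symm⟩
  have hm1 : (0:ℝ) < m - 1 := by linarith
  have hm0 : (0:ℝ) < m := by linarith
  set s : ℝ := m / (m - 1) with hs
  have hs1 : 1 < s := (one_lt_div hm1).2 (by linarith)
  have hs0 : 0 < s := by linarith
  have hq0 : 0 < (m - 1) / m := div_pos hm1 hm0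
  have hqs : (m - 1) / m * s = 1 := by rw [hs]; field_simp
  have hZsum : Summable (fun j : ℕ => 1 / (j:ℝ) ^ s) := Real.summable_one_div_nat_rpow.2 hs1
  set Z : ℝ := ∑' j : ℕ, 1 / (j:ℝ) ^ s with hZdef
  have hZ1 : (1:ℝ) ≤ Z := by
    have h := Summable.le_tsum hZsum 1 (fun j _ => by positivity)
    rw [← hZdef] at h
    simpa using h
  have hZ0 : 0 ≤ Z := le_trans zero_le_one hZ1
  refine ⟨1 / (2 * ((n:ℝ) + 2)), Z ^ n, 2, by positivity, ?_, by norm_num, ?_⟩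
  · have h1 : (1:ℝ) / (2 * ((n:ℝ) + 2)) ≤ 1 := by
      rw [div_le_one (by positivity)]; nlinarith [(Nat.cast_nonneg n : (0:ℝ) ≤ (n:ℕ))]
    exact h1.trans (one_le_pow₀ hZ1)
  intro Ξ hΞ
  have hΞ1 : (1:ℝ) ≤ Ξ := by linarith
  have hΞ0 : (0:ℝ) < Ξ := by linarith
  -- basic rpow facts
  have hΞs1 : (1:ℝ) ≤ Ξ ^ s := by
    have := Real.rpow_le_rpow_of_exponent_le hΞ1 hs0.le
    simpa [Real.rpow_zero] using this
  have hΞleΞs : Ξ ≤ Ξ ^ s := by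
    have := Real.rpow_le_rpow_of_exponent_le hΞ1 hs1.le
    simpa [Real.rpow_one] using this
  have hΞs2 : (2:ℝ) ≤ Ξ ^ s := le_trans hΞ hΞleΞs
  set f : (Fin (n+1) → ℕ) → ℝ := fun v => (v 0 : ℝ)^2 / (1 + ∑ k, (v k : ℝ)^2) with hfdef
  set P : Set (Fin (n+1) → ℕ) := {v | (∀ k, 0 < v k) ∧
      ((v 0 : ℝ)) ^ ((m - 1) / m) * ∏ k ∈ Finset.univ.erase 0, ((v k : ℝ)) ≤ Ξ} with hPdef
  set B : ℕ := ⌊Ξ ^ s⌋₊ with hBdef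
  have hB1 : 1 ≤ B := by
    rw [hBdef]; exact Nat.le_floor (by exact_mod_cast hΞs1)
  have hBle : (B:ℝ) ≤ Ξ ^ s := Nat.floor_le (by positivity)
  set box : Finset (Fin (n+1) → ℕ) := Fintype.piFinset (fun _ : Fin (n+1) => Finset.Icc 1 B)
    with hboxdef
  set S : Finset (Fin (n+1) → ℕ) := box.filter (· ∈ P) with hSdef
  -- key auxiliary: rewrite erased product as product over tail
  have herase : ∀ v : Fin (n+1) → ℕ, 0 < v 0 →
      ∏ k ∈ Finset.univ.erase 0, ((v k : ℝ)) = ∏ k : Fin n, ((v k.succ : ℝ)) := by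
    intro v hv
    have h0 : ((v 0 : ℝ)) ≠ 0 := by positivity
    have h1 : ((v 0 : ℝ)) * ∏ k ∈ Finset.univ.erase 0, ((v k : ℝ))
        = ∏ k : Fin (n+1), ((v k : ℝ)) :=
      Finset.mul_prod_erase Finset.univ (fun k => ((v k : ℝ))) (Finset.mem_univ 0)
    have h2 : ∏ k : Fin (n+1), ((v k : ℝ)) = ((v 0 : ℝ)) * ∏ k : Fin n, ((v k.succ : ℝ)) :=
      Fin.prod_univ_succ _
    have := h1.trans h2
    exact mul_left_cancel₀ h0 this
  -- membership of P in the box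
  have hmemP : ∀ v, v ∈ P → v ∈ box := by
    rintro v ⟨hpos, hineq⟩
    have hc1 : ∀ i, (1:ℝ) ≤ ((v i : ℝ)) := fun i => Nat.one_le_cast.mpr (hpos i)
    have hprodℕ : 1 ≤ ∏ k ∈ Finset.univ.erase 0, v k :=
      Finset.one_le_prod' (fun i _ => hpos i)
    have hprod1 : (1:ℝ) ≤ ∏ k ∈ Finset.univ.erase 0, ((v k : ℝ)) := by
      exact_mod_cast hprodℕ
    have hpow1 : (1:ℝ) ≤ ((v 0 : ℝ)) ^ ((m - 1) / m) := by
      have := Real.rpow_le_rpow zero_le_one (hc1 0) hq0.le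
      simpa [Real.one_rpow] using this
    rw [Fintype.mem_piFinset]
    intro k
    rw [Finset.mem_Icc]
    refine ⟨hpos k, ?_⟩
    by_cases hk : k = 0
    · subst hk
      have h1 : ((v 0 : ℝ)) ^ ((m - 1) / m) ≤ Ξ := by
        calc ((v 0 : ℝ)) ^ ((m - 1) / m)
            ≤ ((v 0 : ℝ)) ^ ((m - 1) / m) * ∏ k ∈ Finset.univ.erase 0, ((v k : ℝ)) :=
              le_mul_of_one_le_right (by positivity) hprod1
          _ ≤ Ξ := hineq
      have h2 : ((v 0 : ℝ)) ≤ Ξ ^ s := by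
        have h3 := Real.rpow_le_rpow (by positivity) h1 hs0.le
        rwa [← Real.rpow_mul (by positivity), hqs, Real.rpow_one] at h3
      exact Nat.le_floor h2
    · have h1ℕ : v k ≤ ∏ j ∈ Finset.univ.erase 0, v j :=
        Finset.single_le_prod' (fun i _ => hpos i)
          (Finset.mem_erase.2 ⟨hk, Finset.mem_univ k⟩)
      have h1 : ((v k : ℝ)) ≤ ∏ j ∈ Finset.univ.erase 0, ((v j : ℝ)) := by
        exact_mod_cast h1ℕ
      have h2 : ∏ j ∈ Finset.univ.erase 0, ((v j : ℝ)) ≤ Ξ := by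
        calc ∏ j ∈ Finset.univ.erase 0, ((v j : ℝ))
            ≤ ((v 0 : ℝ)) ^ ((m - 1) / m) * ∏ j ∈ Finset.univ.erase 0, ((v j : ℝ)) :=
              le_mul_of_one_le_left (le_trans zero_le_one hprod1) hpow1
          _ ≤ Ξ := hineq
      exact Nat.le_floor (le_trans h1 (le_trans h2 hΞleΞs))
  -- the tsum equals a finite sum
  have hts : (∑' ν : {v : Fin (n+1) → ℕ // (∀ k, 0 < v k) ∧
            ((v ⟨0, hr⟩ : ℝ)) ^ ((m - 1) / m) *
              ∏ k ∈ Finset.univ.erase ⟨0, hr⟩, ((v k : ℝ)) ≤ Ξ},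
          ((ν.1 ⟨0, hr⟩ : ℝ)) ^ 2 / (1 + ∑ k, ((ν.1 k : ℝ)) ^ 2)) = ∑ v ∈ S, f v := by
    have h1 : (∑' ν : ↥P, f ν.1) = ∑' v, P.indicator f v := tsum_subtype P f
    have h2 : (∑' v, P.indicator f v) = ∑ v ∈ S, P.indicator f v := by
      apply tsum_eq_sum
      intro v hv
      by_cases h : v ∈ P
      · exact absurd (Finset.mem_filter.2 ⟨hmemP v h, h⟩) hv
      · exact Set.indicator_of_notMem h f
    have h3 : ∑ v ∈ S, P.indicator f v = ∑ v ∈ S, f v := by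
      apply Finset.sum_congr rfl
      intro v hv
      exact Set.indicator_of_mem (Finset.mem_filter.1 hv).2 f
    exact h1.trans (h2.trans h3)
  rw [hts]
  constructor
  · -- lower bound
    set e : ℕ → (Fin (n+1) → ℕ) := fun j k => if k = 0 then j else 1 with hedef
    have hemem : ∀ j ∈ Finset.Icc 1 B, e j ∈ S := by
      intro j hj
      rw [Finset.mem_Icc] at hj
      have hjR : (j:ℝ) ≤ Ξ ^ s := le_trans (Nat.cast_le.mpr hj.2) hBle
      refine Finset.mem_filter.2 ⟨?_, ?_, ?_⟩
      · rw [Fintype.mem_piFinset]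
        intro k
        rw [Finset.mem_Icc]
        by_cases hk : k = 0 <;> simp [hedef, hk, hj.1, hj.2, hB1]
      · intro k
        by_cases hk : k = 0 <;> simp [hedef, hk] <;> omega
      · have hprod : ∏ k ∈ Finset.univ.erase 0, ((e j k : ℝ)) = 1 := by
          apply Finset.prod_eq_one
          intro k hk
          have : k ≠ 0 := (Finset.mem_erase.1 hk).1
          simp [hedef, this]
        have he0 : (e j 0 : ℝ) = (j : ℝ) := by simp [hedef]
        rw [hprod, mul_one, he0]
        have h1 : ((j:ℝ)) ^ ((m-1)/m) ≤ (Ξ ^ s) ^ ((m-1)/m) :=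
          Real.rpow_le_rpow (by positivity) hjR hq0.le
        calc ((j:ℝ)) ^ ((m-1)/m) ≤ (Ξ ^ s) ^ ((m-1)/m) := h1
          _ = Ξ := by
            rw [← Real.rpow_mul hΞ0.le, mul_comm s ((m-1)/m), hqs, Real.rpow_one]
    have hval : ∀ j ∈ Finset.Icc 1 B, 1 / ((n:ℝ) + 2) ≤ f (e j) := by
      intro j hj
      rw [Finset.mem_Icc] at hj
      have hj1 : (1:ℝ) ≤ (j:ℝ) := by exact_mod_cast hj.1
      have hsum : ∑ k, ((e j k : ℝ))^2 = (j:ℝ)^2 + n := by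
        rw [Fin.sum_univ_succ]
        have h0 : ((e j 0 : ℝ))^2 = (j:ℝ)^2 := by simp [hedef]
        have hk : ∀ k : Fin n, ((e j k.succ : ℝ))^2 = 1 := by
          intro k; simp [hedef, Fin.succ_ne_zero]
        rw [h0]
        simp [hk]
      have he0 : (e j 0 : ℝ) = (j : ℝ) := by simp [hedef]
      rw [hfdef]
      simp only [he0, hsum]
      rw [div_le_div_iff₀ (by positivity) (by positivity)]
      nlinarith [sq_nonneg ((j:ℝ) - 1), (Nat.cast_nonneg n : (0:ℝ) ≤ (n:ℕ))]
    have hinj : Set.InjOn e ↑(Finset.Icc 1 B) := by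
      intro a _ b _ hab
      have := congrFun hab 0
      simpa [hedef] using this
    have hfnonneg : ∀ v ∈ S, 0 ≤ f v := fun v _ => by positivity
    have h1 : ∑ j ∈ Finset.Icc 1 B, f (e j) ≤ ∑ v ∈ S, f v := by
      rw [← Finset.sum_image (fun a ha b hb h => hinj ha hb h)]
      apply Finset.sum_le_sum_of_subset_of_nonneg
      · intro v hv
        obtain ⟨j, hj, rfl⟩ := Finset.mem_image.1 hv
        exact hemem j hj
      · intro v hv _; positivity
    have h2 : (B:ℝ) * (1 / ((n:ℝ) + 2)) ≤ ∑ j ∈ Finset.Icc 1 B, f (e j) := by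
      have := Finset.sum_le_sum hval
      simpa [Nat.card_Icc, mul_comm] using this
    have hBge : Ξ ^ s - 1 ≤ (B:ℝ) := by
      have := Nat.sub_one_lt_floor (Ξ ^ s)
      linarith
    calc 1 / (2 * ((n:ℝ) + 2)) * Ξ ^ s
        ≤ (Ξ ^ s - 1) * (1 / ((n:ℝ) + 2)) := by
          rw [div_mul_eq_mul_div, one_mul, mul_one_div,
            div_le_div_iff₀ (by positivity) (by positivity)]
          nlinarith [mul_nonneg (by positivity : (0:ℝ) ≤ (n:ℝ) + 2)
            (by linarith : (0:ℝ) ≤ Ξ ^ s - 2)]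
      _ ≤ (B:ℝ) * (1 / ((n:ℝ) + 2)) := by
          apply mul_le_mul_of_nonneg_right hBge (by positivity)
      _ ≤ ∑ j ∈ Finset.Icc 1 B, f (e j) := h2
      _ ≤ ∑ v ∈ S, f v := h1
  · -- upper bound
    have hfle1 : ∀ v ∈ S, f v ≤ 1 := by
      intro v hv
      have hsum : ((v 0 : ℝ))^2 ≤ ∑ k, ((v k : ℝ))^2 :=
        Finset.single_le_sum (f := fun k : Fin (n+1) => ((v k : ℝ))^2)
          (fun i _ => by positivity) (Finset.mem_univ 0)
      rw [hfdef]
      rw [div_le_one (by positivity)]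
      linarith
    have hcard1 : ∑ v ∈ S, f v ≤ (S.card : ℝ) := by
      calc ∑ v ∈ S, f v ≤ ∑ _v ∈ S, (1:ℝ) := Finset.sum_le_sum hfle1
        _ = (S.card : ℝ) := by simp
    set boxn : Finset (Fin n → ℕ) := Fintype.piFinset (fun _ : Fin n => Finset.Icc 1 B)
      with hboxndef
    have hmaps : ∀ v ∈ S, Fin.tail v ∈ boxn := by
      intro v hv
      have hb := (Finset.mem_filter.1 hv).1
      rw [Fintype.mem_piFinset] at hb ⊢
      intro k
      exact hb k.succ
    have hcard2 : S.card = ∑ w ∈ boxn, (S.filter (fun v => Fin.tail v = w)).card :=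
      Finset.card_eq_sum_card_fiberwise hmaps
    have hfiber : ∀ w ∈ boxn,
        ((S.filter (fun v => Fin.tail v = w)).card : ℝ) ≤ Ξ ^ s * ∏ k, 1 / ((w k : ℝ)) ^ s := by
      intro w hw
      rw [Fintype.mem_piFinset] at hw
      have hw1 : ∀ k, 1 ≤ w k := fun k => (Finset.mem_Icc.1 (hw k)).1
      have hPw0 : (0:ℝ) < ∏ k, ((w k : ℝ)) := by
        apply Finset.prod_pos
        intro k _
        exact_mod_cast hw1 k
      set Mw : ℕ := ⌊(Ξ / ∏ k, ((w k : ℝ))) ^ s⌋₊ with hMwdef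
      have hstep : (S.filter (fun v => Fin.tail v = w)).card ≤ (Finset.Icc 1 Mw).card := by
        apply Finset.card_le_card_of_injOn (fun v => v 0)
        · intro v hv
          obtain ⟨hvS, hvt⟩ := Finset.mem_filter.1 hv
          obtain ⟨hvpos, hvineq⟩ := (Finset.mem_filter.1 hvS).2
          simp only [Finset.coe_Icc, Set.mem_Icc]
          refine ⟨hvpos 0, ?_⟩
          have hpr : ∏ k ∈ Finset.univ.erase 0, ((v k : ℝ)) = ∏ k, ((w k : ℝ)) := by
            rw [herase v (hvpos 0)]
            apply Finset.prod_congr rfl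
            intro k _
            rw [← hvt]
            rfl
          rw [hpr] at hvineq
          have h1 : ((v 0 : ℝ)) ^ ((m-1)/m) ≤ Ξ / ∏ k, ((w k : ℝ)) :=
            (le_div_iff₀ hPw0).2 hvineq
          have h2 : ((v 0 : ℝ)) ≤ (Ξ / ∏ k, ((w k : ℝ))) ^ s := by
            have h3 := Real.rpow_le_rpow (by positivity) h1 hs0.le
            rwa [← Real.rpow_mul (by positivity), hqs, Real.rpow_one] at h3
          exact Nat.le_floor h2
        · intro u hu v hv huv
          obtain ⟨_, hut⟩ := Finset.mem_filter.1 hu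
          obtain ⟨_, hvt⟩ := Finset.mem_filter.1 hv
          have htail : Fin.tail u = Fin.tail v := hut.trans hvt.symm
          have h0 : u 0 = v 0 := huv
          calc u = Fin.cons (u 0) (Fin.tail u) := (Fin.cons_self_tail u).symm
            _ = Fin.cons (v 0) (Fin.tail v) := by rw [h0, htail]
            _ = v := Fin.cons_self_tail v
      have hMwle : (Mw : ℝ) ≤ (Ξ / ∏ k, ((w k : ℝ))) ^ s := Nat.floor_le (by positivity)
      have hfinal : ((Finset.Icc 1 Mw).card : ℝ) ≤ Ξ ^ s * ∏ k, 1 / ((w k : ℝ)) ^ s := by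
        have hc : ((Finset.Icc 1 Mw).card : ℝ) = (Mw : ℝ) := by
          rw [Nat.card_Icc]; simp
        rw [hc]
        calc (Mw : ℝ) ≤ (Ξ / ∏ k, ((w k : ℝ))) ^ s := hMwle
          _ = Ξ ^ s / (∏ k, ((w k : ℝ))) ^ s := Real.div_rpow hΞ0.le hPw0.le s
          _ = Ξ ^ s / ∏ k, ((w k : ℝ)) ^ s := by
              rw [Real.finset_prod_rpow _ _ (fun i _ => by positivity)]
          _ = Ξ ^ s * ∏ k, 1 / ((w k : ℝ)) ^ s := by
              rw [div_eq_mul_inv]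
              congr 1
              rw [← Finset.prod_inv_distrib]
              apply Finset.prod_congr rfl
              intro k _
              rw [one_div]
        
      calc ((S.filter (fun v => Fin.tail v = w)).card : ℝ)
          ≤ ((Finset.Icc 1 Mw).card : ℝ) := by exact_mod_cast hstep
        _ ≤ Ξ ^ s * ∏ k, 1 / ((w k : ℝ)) ^ s := hfinal
    have hIccZ : ∑ j ∈ Finset.Icc 1 B, 1 / ((j:ℝ)) ^ s ≤ Z := by
      rw [hZdef]
      exact Summable.sum_le_tsum _ (fun j _ => by positivity) hZsum
    have hcard3 : (S.card : ℝ) ≤ Ξ ^ s * Z ^ n := by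
      have h1 : (S.card : ℝ) = ∑ w ∈ boxn, ((S.filter (fun v => Fin.tail v = w)).card : ℝ) := by
        rw [hcard2]; push_cast; ring
      rw [h1]
      calc ∑ w ∈ boxn, ((S.filter (fun v => Fin.tail v = w)).card : ℝ)
          ≤ ∑ w ∈ boxn, Ξ ^ s * ∏ k, 1 / ((w k : ℝ)) ^ s := Finset.sum_le_sum hfiber
        _ = Ξ ^ s * ∑ w ∈ boxn, ∏ k, 1 / ((w k : ℝ)) ^ s := by rw [Finset.mul_sum]
        _ = Ξ ^ s * ∏ k : Fin n, ∑ j ∈ Finset.Icc 1 B, 1 / ((j:ℝ)) ^ s := by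
            rw [Finset.prod_univ_sum]
        _ ≤ Ξ ^ s * ∏ k : Fin n, Z := by
            apply mul_le_mul_of_nonneg_left _ (by positivity)
            apply Finset.prod_le_prod
            · intro k _
              apply Finset.sum_nonneg
              intro j _; positivity
            · intro k _
              exact hIccZ
        _ = Ξ ^ s * Z ^ n := by
            rw [Finset.prod_const, Finset.card_univ, Fintype.card_fin]
    calc ∑ v ∈ S, f v ≤ (S.card : ℝ) := hcard1
      _ ≤ Ξ ^ s * Z ^ n := hcard3
      _ = Z ^ n * Ξ ^ s := mul_comm _ _
end
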